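/- arXiv:1611.00101 — 5 statements merged into one kernel-verified Lean document; each statement's English description precedes it below -/
import Mathlib

section
/- Let F₂ be the free group on generators a, b, let n ≥ 1, and let w ∈ F₂ be a reduced word with exponent sum k (where the exponent sum homomorphism sends a,b ↦ 1). If |w| + |k| ≤ 2n - 1, then the word length of bⁿa⁻ⁿw is at least 2n - |k|, and hence |bⁿa⁻ⁿw| + |k| ≥ 2n. -/
/-- The generator a of the free group F₂ on two generators. -/
def fa : FreeGroup Bool := FreeGroup.of true
/-- The generator b of the free group F₂ on two generators. -/
def fb : FreeGroup Bool := FreeGroup.of false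

/-- The exponent sum homomorphism F₂ → ℤ sending a, b ↦ 1. -/
def expSum : FreeGroup Bool →* Multiplicative ℤ :=
  FreeGroup.lift fun _ => Multiplicative.ofAdd 1

namespace Stmt6Aux

/-- No cancellation between consecutive letters. -/
def R (p q : Bool × Bool) : Prop := ¬(p.1 = q.1 ∧ p.2 = !q.2)

lemma reduce_eq_self_of_chain : ∀ {L : List (Bool × Bool)}, List.Chain' R L →
    FreeGroup.reduce L = L := by
  intro L
  induction L with
  | nil => intro _; rfl
  | cons x L ih =>
    intro h
    rw [FreeGroup.reduce.cons, ih h.tail]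
    cases L with
    | nil => rfl
    | cons hd tl =>
      have hr : R x hd := (List.isChain_cons_cons.mp h).1
      simp only [R] at hr
      simp [hr]

lemma chain_of_reduce_eq_self : ∀ {L : List (Bool × Bool)}, FreeGroup.reduce L = L →
    List.Chain' R L := by
  intro L
  induction L with
  | nil => intro _; exact List.isChain_nil
  | cons x L ih =>
    intro h
    have hlen : (FreeGroup.reduce L).length ≤ L.length :=
      (FreeGroup.reduce.red).length_le
    rw [FreeGroup.reduce.cons] at h
    cases hred : FreeGroup.reduce L with
    | nil =>
      rw [hred] at h
      have : L = [] := by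
        have := congrArg List.length h
        simp at this
        exact this
      subst this; exact List.isChain_singleton _
    | cons hd tl =>
      rw [hred] at h hlen
      change (if x.1 = hd.1 ∧ x.2 = !hd.2 then tl else x :: hd :: tl) = x :: L at h
      by_cases hc : x.1 = hd.1 ∧ x.2 = !hd.2
      · rw [if_pos hc] at h
        exfalso
        have := congrArg List.length h
        simp at this hlen
        omega
      · rw [if_neg hc] at h
        have hL : L = hd :: tl := by
          have := h
          injection this with _ h2
          exact h2.symm
        have hLr : FreeGroup.reduce L = L := by rw [hred, hL]
        rw [hL]
        exact List.isChain_cons_cons.mpr ⟨hc, hL ▸ ih hLr⟩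

/-- signed sum of a word -/
def ssum (L : List (Bool × Bool)) : ℤ :=
  (L.map fun p => if p.2 then (1 : ℤ) else -1).sum

lemma ssum_nil : ssum [] = 0 := rfl

lemma ssum_cons (p : Bool × Bool) (L : List (Bool × Bool)) :
    ssum (p :: L) = (if p.2 then (1 : ℤ) else -1) + ssum L := by
  simp [ssum]

lemma abs_ssum_le (L : List (Bool × Bool)) : |ssum L| ≤ L.length := by
  induction L with
  | nil => simp [ssum]
  | cons p L ih =>
    rw [ssum_cons]
    have h1 : |(if p.2 then (1 : ℤ) else -1)| = 1 := by split <;> simp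
    calc |(if p.2 then (1 : ℤ) else -1) + ssum L|
        ≤ |(if p.2 then (1 : ℤ) else -1)| + |ssum L| := abs_add_le _ _
      _ ≤ 1 + L.length := by rw [h1]; linarith
      _ = ((p :: L).length : ℤ) := by simp; ring

lemma expSum_mk (L : List (Bool × Bool)) :
    expSum (FreeGroup.mk L) = Multiplicative.ofAdd (ssum L) := by
  induction L with
  | nil =>
    have : FreeGroup.mk ([] : List (Bool × Bool)) = 1 := rfl
    rw [this, ssum_nil, map_one]; rfl
  | cons p L ih =>
    have hsplit : FreeGroup.mk (p :: L) = FreeGroup.mk [p] * FreeGroup.mk L := by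
      rw [FreeGroup.mul_mk]; rfl
    have hone : expSum (FreeGroup.mk [p]) =
        Multiplicative.ofAdd (if p.2 then (1 : ℤ) else -1) := by
      obtain ⟨a, b⟩ := p
      cases b
      · have : FreeGroup.mk [(a, false)] = (FreeGroup.of a)⁻¹ := by
          rw [show (FreeGroup.of a) = FreeGroup.mk [(a, true)] from rfl,
            FreeGroup.inv_mk]
          simp [FreeGroup.invRev]
        rw [this, map_inv]
        simp [expSum]
      · have : FreeGroup.mk [(a, true)] = FreeGroup.of a := rfl
        rw [this]
        simp [expSum]
    rw [hsplit, map_mul, hone, ih, ssum_cons]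
    rfl

lemma chain_replicate (m : ℕ) (p : Bool × Bool) (h : R p p) :
    List.Chain' R (List.replicate m p) := by
  induction m with
  | zero => exact List.isChain_nil
  | succ m ih =>
    cases m with
    | zero => exact List.isChain_singleton _
    | succ m' =>
      rw [List.replicate_succ]
      rw [List.replicate_succ]
      exact List.isChain_cons_cons.mpr ⟨h, by rw [← List.replicate_succ]; exact ih⟩

end Stmt6Aux

open Stmt6Aux in
/-- If w ∈ F₂ has exponent sum k and |w| + |k| ≤ 2n - 1 (with n ≥ 1), then
|bⁿa⁻ⁿw| ≥ 2n - |k|, and hence |bⁿa⁻ⁿw| + |k| ≥ 2n. -/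
theorem stmt6 (n : ℕ) (hn : 1 ≤ n) (w : FreeGroup Bool) (k : ℤ)
    (hk : expSum w = Multiplicative.ofAdd k)
    (hlen : (w.norm : ℤ) + |k| ≤ 2 * n - 1) :
    ((fb ^ n * fa ^ (-(n : ℤ)) * w).norm : ℤ) ≥ 2 * n - |k| ∧
    ((fb ^ n * fa ^ (-(n : ℤ)) * w).norm : ℤ) + |k| ≥ 2 * n := by
  classical
  set L := w.toWord with hL
  set P : Bool × Bool → Bool := fun p => p = (true, true) with hP
  set x := (L.takeWhile P).length with hx
  set L₂ := L.dropWhile P with hL2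
  -- the takeWhile part is a replicate
  have htake : L.takeWhile P = List.replicate x (true, true) := by
    apply List.eq_replicate_of_mem
    intro b hb
    have := List.mem_takeWhile_imp hb
    simpa [hP] using this
  have hsplit : L = List.replicate x (true, true) ++ L₂ := by
    rw [← htake, hL2, List.takeWhile_append_dropWhile]
  -- decompose w
  have hw : w = fa ^ x * FreeGroup.mk L₂ := by
    conv_lhs => rw [← FreeGroup.mk_toWord (x := w)]
    rw [← hL, hsplit, ← FreeGroup.mul_mk]
    congr 1
    rw [show fa ^ x = FreeGroup.mk ((fa ^ x).toWord) from (FreeGroup.mk_toWord).symm]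
    congr 1
    rw [fa, FreeGroup.toWord_of_pow]
  -- exponent sums
  have hkx : k = x + ssum L₂ := by
    have h1 : expSum w = Multiplicative.ofAdd ((x : ℤ) + ssum L₂) := by
      rw [hw, map_mul, expSum_mk]
      have : expSum (fa ^ x) = Multiplicative.ofAdd (x : ℤ) := by
        rw [fa, map_pow]
        simp only [expSum, FreeGroup.lift_apply_of]
        rw [← ofAdd_nsmul]
        norm_num
      rw [this]
      rfl
    rw [hk] at h1
    exact Multiplicative.ofAdd.injective h1
  have hs2 : |ssum L₂| ≤ (L₂.length : ℤ) := abs_ssum_le L₂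
  -- lengths
  have hwnorm : (w.norm : ℤ) = x + L₂.length := by
    have : w.norm = L.length := rfl
    rw [this, hsplit]
    simp
  -- x < n
  have hxn : x < n := by
    have hk1 : k ≤ |k| := le_abs_self k
    have hk2 : -k ≤ |k| := neg_le_abs k
    have hs1 : ssum L₂ ≤ |ssum L₂| := le_abs_self _
    have hs2' : -(ssum L₂) ≤ |ssum L₂| := neg_le_abs _
    have habs : (0:ℤ) ≤ |k| := abs_nonneg k
    rw [hwnorm] at hlen
    omega
  -- the reduced word of the product
  set M : List (Bool × Bool) :=
    List.replicate n (false, true) ++ (List.replicate (n - x) (true, false) ++ L₂)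
    with hM
  have hchainL : List.Chain' R L := chain_of_reduce_eq_self (FreeGroup.reduce_toWord w)
  have hchainL2 : List.Chain' R L₂ := by
    rw [hsplit] at hchainL
    exact (List.isChain_append.mp hchainL).2.1
  have hhead : ∀ q ∈ L₂.head?, ¬(q = (true, true)) := by
    intro q hq
    cases hq2 : L₂ with
    | nil => rw [hq2] at hq; simp at hq
    | cons a l =>
      rw [hq2] at hq
      simp at hq
      subst hq
      have hq2' : List.dropWhile P L = a :: l := hq2
      have hne : List.dropWhile P L ≠ [] := by rw [hq2']; simp
      have h1 := List.head_dropWhile_not P (l := L) hne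
      have h2 : (List.dropWhile P L).head hne = a := by simp [hq2']
      rw [h2] at h1
      simpa [hP] using h1
  have hRbb : R ((false : Bool), (true : Bool)) (false, true) := by simp [R]
  have hRaa : R ((true : Bool), (false : Bool)) (true, false) := by simp [R]
  have hchainM : List.Chain' R M := by
    rw [hM]
    rw [List.Chain', List.isChain_append]
    refine ⟨chain_replicate _ _ hRbb, ?_, ?_⟩
    · rw [List.isChain_append]
      refine ⟨chain_replicate _ _ hRaa, hchainL2, ?_⟩
      intro p hp q hq
      have hpmem : p ∈ List.replicate (n - x) ((true : Bool), (false : Bool)) :=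
        List.mem_of_mem_getLast? hp
      have hpe : p = (true, false) := List.eq_of_mem_replicate hpmem
      have hqne : ¬(q = (true, true)) := hhead q hq
      subst hpe
      simp only [R]
      rintro ⟨h1, h2⟩
      apply hqne
      obtain ⟨q1, q2⟩ := q
      simp at h1 h2
      simp [← h1, h2]
    · intro p hp q hq
      have hpe : p = (false, true) :=
        List.eq_of_mem_replicate (List.mem_of_mem_getLast? hp)
      have hq' : q ∈ List.replicate (n - x) ((true : Bool), (false : Bool)) ++ L₂ :=
        List.mem_of_mem_head? hq
      subst hpe
      -- q's first component: either from replicate (true) or from L₂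
      have hnx : n - x ≠ 0 := by omega
      have hqe : q = (true, false) := by
        cases hcase : (n - x) with
        | zero => omega
        | succ m =>
          rw [hcase] at hq'
          rw [List.replicate_succ] at hq'
          rw [hcase, List.replicate_succ] at hq
          simp at hq
          exact hq.symm
      subst hqe
      simp [R]
  -- compute the group element
  have hg : fb ^ n * fa ^ (-(n : ℤ)) * w = FreeGroup.mk M := by
    have hb : fb ^ n = FreeGroup.mk (List.replicate n (false, true)) := by
      rw [show fb ^ n = FreeGroup.mk ((fb ^ n).toWord) from (FreeGroup.mk_toWord).symm]
      congr 1
      rw [fb, FreeGroup.toWord_of_pow]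
    have hainv : ∀ m : ℕ, (fa ^ m)⁻¹ = FreeGroup.mk (List.replicate m (true, false)) := by
      intro m
      rw [show fa ^ m = FreeGroup.mk ((fa ^ m).toWord) from (FreeGroup.mk_toWord).symm]
      rw [fa, FreeGroup.toWord_of_pow, FreeGroup.inv_mk]
      congr 1
      simp [FreeGroup.invRev]
    have hpow : fa ^ (-(n : ℤ)) * fa ^ x = (fa ^ (n - x))⁻¹ := by
      have h1 : fa ^ (-(n : ℤ)) * fa ^ x = fa ^ ((x : ℤ) - n) := by
        rw [← zpow_natCast fa x, ← zpow_add]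
        congr 1
        ring
      have h2 : ((x : ℤ) - n) = -(((n - x : ℕ) : ℤ)) := by
        push_cast [Nat.cast_sub hxn.le]
        ring
      rw [h1, h2, zpow_neg, zpow_natCast]
    rw [hw, ← mul_assoc, mul_assoc (fb ^ n), hpow, hb, hainv, FreeGroup.mul_mk,
      FreeGroup.mul_mk, hM, List.append_assoc]
  have hnorm : ((fb ^ n * fa ^ (-(n : ℤ)) * w).norm : ℤ) = n + (n - x : ℕ) + L₂.length := by
    have h1 : (fb ^ n * fa ^ (-(n : ℤ)) * w).norm = M.length := by
      rw [hg]
      show (FreeGroup.mk M).toWord.length = M.length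
      rw [FreeGroup.toWord_mk, reduce_eq_self_of_chain hchainM]
    rw [h1, hM]
    simp
    push_cast
    ring
  -- final arithmetic
  have hcast : ((n - x : ℕ) : ℤ) = (n : ℤ) - x := by
    push_cast [Nat.cast_sub hxn.le]; ring
  rw [hnorm, hcast]
  have hk1 : k ≤ |k| := le_abs_self k
  have hk2 : -k ≤ |k| := neg_le_abs k
  have hs1 : ssum L₂ ≤ |ssum L₂| := le_abs_self _
  have hs2' : -(ssum L₂) ≤ |ssum L₂| := neg_le_abs _
  constructor <;> omega
end

section
/- In the group G = ⟨a,b,c,t | ac=ca, bc=cb, act=tac, bct=tbc⟩ with this generating set, for every n ≥ 1 the elements aⁿb⁻ⁿ and taⁿb⁻ⁿ⁺¹ both have word length 2n. -/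
/-- The word length of `g` with respect to a generating set `S`: the least `n`
such that `g` is a product of `n` elements of `S ∪ S⁻¹`. -/
noncomputable def wordLength {G : Type*} [Group G] (S : Set G) (g : G) : ℕ :=
  sInf {n | ∃ l : List G, l.length = n ∧ (∀ x ∈ l, x ∈ S ∨ x⁻¹ ∈ S) ∧ l.prod = g}

/-- Relators of ⟨a,b,c,t | ac=ca, bc=cb, act=tac, bct=tbc⟩, with
a = 0, b = 1, c = 2, t = 3. -/
def grels : Set (FreeGroup (Fin 4)) :=
  { FreeGroup.of 0 * FreeGroup.of 2 * (FreeGroup.of 2 * FreeGroup.of 0)⁻¹,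
    FreeGroup.of 1 * FreeGroup.of 2 * (FreeGroup.of 2 * FreeGroup.of 1)⁻¹,
    FreeGroup.of 0 * FreeGroup.of 2 * FreeGroup.of 3 *
      (FreeGroup.of 3 * FreeGroup.of 0 * FreeGroup.of 2)⁻¹,
    FreeGroup.of 1 * FreeGroup.of 2 * FreeGroup.of 3 *
      (FreeGroup.of 3 * FreeGroup.of 1 * FreeGroup.of 2)⁻¹ }

/-- The group G = ⟨a,b,c,t | ac=ca, bc=cb, act=tac, bct=tbc⟩ ≅ F₂ × F₂. -/
abbrev G : Type := PresentedGroup grels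

/-- The generator a of G. -/
def ga : G := PresentedGroup.of 0
/-- The generator b of G. -/
def gb : G := PresentedGroup.of 1
/-- The generator c of G. -/
def gc : G := PresentedGroup.of 2
/-- The generator t of G. -/
def gt : G := PresentedGroup.of 3

/-- The generating set S₂ = {a, b, c, t} of G. -/
def SG : Set G := {ga, gb, gc, gt}

-- auxiliary
def fpsi : Fin 4 → Multiplicative (ℤ × ℤ × ℤ) :=
  ![Multiplicative.ofAdd (1,0,0), Multiplicative.ofAdd (0,1,0), 1, Multiplicative.ofAdd (0,0,1)]

lemma fpsi_rels : ∀ r ∈ grels, FreeGroup.lift fpsi r = 1 := by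
  intro r hr
  rcases hr with h | h | h | h <;> subst h <;>
    simp only [map_mul, map_inv, FreeGroup.lift_apply_of, fpsi, Matrix.cons_val_zero,
      Matrix.cons_val_one, Matrix.head_cons] <;> decide

noncomputable def psi : G →* Multiplicative (ℤ × ℤ × ℤ) := PresentedGroup.toGroup fpsi_rels

def nu (m : Multiplicative (ℤ × ℤ × ℤ)) : ℤ :=
  |(Multiplicative.toAdd m).1| + |(Multiplicative.toAdd m).2.1| + |(Multiplicative.toAdd m).2.2|

lemma nu_mul (u v : Multiplicative (ℤ × ℤ × ℤ)) : nu (u * v) ≤ nu u + nu v := by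
  simp only [nu, toAdd_mul, Prod.fst_add, Prod.snd_add]
  have := abs_add_le (Multiplicative.toAdd u).1 (Multiplicative.toAdd v).1
  have := abs_add_le (Multiplicative.toAdd u).2.1 (Multiplicative.toAdd v).2.1
  have := abs_add_le (Multiplicative.toAdd u).2.2 (Multiplicative.toAdd v).2.2
  linarith

lemma nu_inv (u : Multiplicative (ℤ × ℤ × ℤ)) : nu u⁻¹ = nu u := by
  simp [nu]

lemma nu_letter {x : G} (hx : x ∈ SG ∨ x⁻¹ ∈ SG) : nu (psi x) ≤ 1 := by
  have hS : ∀ y : G, y ∈ SG → nu (psi y) ≤ 1 := by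
    intro y hy
    rcases hy with h | h | h | h <;> subst h <;>
      simp [psi, ga, gb, gc, gt, PresentedGroup.toGroup.of, fpsi, nu]
  rcases hx with h | h
  · exact hS x h
  · have := hS _ h
    rwa [map_inv, nu_inv] at this

lemma nu_prod (l : List G) (hl : ∀ x ∈ l, x ∈ SG ∨ x⁻¹ ∈ SG) :
    nu (psi l.prod) ≤ l.length := by
  induction l with
  | nil => simp [nu]
  | cons x l ih =>
    have h1 : nu (psi x) ≤ 1 := nu_letter (hl x (by simp))
    have h2 : nu (psi l.prod) ≤ l.length := ih (fun y hy => hl y (by simp [hy]))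
    calc nu (psi (x :: l).prod) = nu (psi x * psi l.prod) := by simp
    _ ≤ nu (psi x) + nu (psi l.prod) := nu_mul _ _
    _ ≤ 1 + l.length := by linarith
    _ = ((x :: l).length : ℤ) := by simp; ring

lemma psi_ga : psi ga = Multiplicative.ofAdd (1,0,0) := by
  simp [psi, ga, PresentedGroup.toGroup.of, fpsi]
lemma psi_gb : psi gb = Multiplicative.ofAdd (0,1,0) := by
  simp [psi, gb, PresentedGroup.toGroup.of, fpsi]
lemma psi_gt : psi gt = Multiplicative.ofAdd (0,0,1) := by
  simp [psi, gt, PresentedGroup.toGroup.of, fpsi]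

/-- In (G, {a,b,c,t}), for every n ≥ 1 the elements aⁿb⁻ⁿ and taⁿb⁻ⁿ⁺¹ both
have word length 2n. -/
theorem stmt8 (n : ℕ) (hn : 1 ≤ n) :
    wordLength SG (ga ^ n * gb ^ (-(n : ℤ))) = 2 * n ∧
    wordLength SG (gt * ga ^ n * gb ^ (1 - (n : ℤ))) = 2 * n := by
  constructor
  · -- word length of a^n b^{-n}
    have hmem : (2 * n) ∈ {m | ∃ l : List G, l.length = m ∧
        (∀ x ∈ l, x ∈ SG ∨ x⁻¹ ∈ SG) ∧ l.prod = ga ^ n * gb ^ (-(n : ℤ))} := by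
      refine ⟨List.replicate n ga ++ List.replicate n gb⁻¹, by simp [two_mul], ?_, ?_⟩
      · intro x hx
        rcases List.mem_append.1 hx with h | h
        · left; rw [List.eq_of_mem_replicate h]; exact Or.inl rfl
        · right; rw [List.eq_of_mem_replicate h, inv_inv]
          exact Or.inr (Or.inl rfl)
      · rw [List.prod_append, List.prod_replicate, List.prod_replicate, inv_pow,
          ← zpow_natCast gb, ← zpow_neg]
    refine le_antisymm (Nat.sInf_le hmem) (le_csInf ⟨_, hmem⟩ ?_)
    rintro m ⟨l, hlen, hmemb, hprod⟩
    have key := nu_prod l hmemb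
    rw [hprod, hlen] at key
    have hval : nu (psi (ga ^ n * gb ^ (-(n : ℤ)))) = 2 * n := by
      rw [map_mul, map_pow, map_zpow, psi_ga, psi_gb]
      simp only [nu, toAdd_mul, toAdd_pow, toAdd_zpow, toAdd_ofAdd, Prod.smul_mk,
        Prod.fst_add, Prod.snd_add, Prod.smul_fst, Prod.smul_snd, smul_eq_mul,
        Prod.fst_mul, Prod.snd_mul]
      simp
      ring
    rw [hval] at key
    exact_mod_cast key
  · -- word length of t a^n b^{1-n}
    have hmem : (2 * n) ∈ {m | ∃ l : List G, l.length = m ∧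
        (∀ x ∈ l, x ∈ SG ∨ x⁻¹ ∈ SG) ∧ l.prod = gt * ga ^ n * gb ^ (1 - (n : ℤ))} := by
      refine ⟨gt :: (List.replicate n ga ++ List.replicate (n-1) gb⁻¹),
        by simp; omega, ?_, ?_⟩
      · intro x hx
        rcases List.mem_cons.1 hx with h | h
        · left; rw [h]; exact Or.inr (Or.inr (Or.inr rfl))
        rcases List.mem_append.1 h with h | h
        · left; rw [List.eq_of_mem_replicate h]; exact Or.inl rfl
        · right; rw [List.eq_of_mem_replicate h, inv_inv]
          exact Or.inr (Or.inl rfl)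
      · rw [List.prod_cons, List.prod_append, List.prod_replicate, List.prod_replicate,
          inv_pow, ← zpow_natCast gb, ← zpow_neg, ← mul_assoc]
        congr 2
        omega
    refine le_antisymm (Nat.sInf_le hmem) (le_csInf ⟨_, hmem⟩ ?_)
    rintro m ⟨l, hlen, hmemb, hprod⟩
    have key := nu_prod l hmemb
    rw [hprod, hlen] at key
    have hval : nu (psi (gt * ga ^ n * gb ^ (1 - (n : ℤ)))) = 2 * n := by
      rw [map_mul, map_mul, map_pow, map_zpow, psi_ga, psi_gb, psi_gt]
      simp only [nu, toAdd_mul, toAdd_pow, toAdd_zpow, toAdd_ofAdd, Prod.smul_mk,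
        Prod.fst_add, Prod.snd_add, Prod.smul_fst, Prod.smul_snd, smul_eq_mul,
        Prod.fst_mul, Prod.snd_mul]
      simp only [nsmul_eq_mul, smul_zero, mul_zero, mul_one, add_zero, zero_add, abs_one]
      rw [abs_of_nonneg (by positivity : (0:ℤ) ≤ (n:ℤ)),
        abs_of_nonpos (by omega : (1 - (n:ℤ)) ≤ 0)]
      omega
    rw [hval] at key
    exact_mod_cast key
end

section
/- In the group G = ⟨a,b,c,t | ac=ca, bc=cb, act=tac, bct=tbc⟩, for every n ≥ 1, every path in the Cayley graph from aⁿb⁻ⁿ to taⁿb⁻ⁿ⁺¹ that stays inside the ball of radius 2n about the identity has length at least 4n. -/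
/-- `steps` is a sequence of generator steps tracing a path in the Cayley graph
of `(G,S)` from `u` to `v` all of whose vertices lie in the set `B`. -/
def IsPathIn {G : Type*} [Group G] (S : Set G) (B : Set G) (u v : G)
    (steps : List G) : Prop :=
  (∀ x ∈ steps, x ∈ S ∨ x⁻¹ ∈ S) ∧ u * steps.prod = v ∧
    ∀ l, l <+: steps → u * l.prod ∈ B


namespace S10
open FreeGroup

abbrev F2 := FreeGroup Bool
abbrev Lambda := Bool × Bool

def Rl (a b : Lambda) : Prop := ¬(b.1 = a.1 ∧ b.2 = !a.2)

def RedW (L : List Lambda) : Prop := List.Chain' Rl L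

lemma reduce_eq_self {L : List Lambda} (h : RedW L) : reduce L = L := by
  induction L with
  | nil => simp
  | cons x L ih =>
    rw [reduce.cons, ih h.tail]
    cases L with
    | nil => rfl
    | cons hd tl =>
      have hx : Rl x hd := (List.isChain_cons_cons.1 h).1
      have : ¬(x.1 = hd.1 ∧ x.2 = !hd.2) := by
        rintro ⟨h1, h2⟩
        obtain ⟨x1, x2⟩ := x
        obtain ⟨h1', h2'⟩ := hd
        exact hx ⟨h1.symm, by simp_all⟩
      simp only [this, if_false]

lemma toWord_mk_eq {L : List Lambda} (h : RedW L) : (mk L).toWord = L := by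
  rw [toWord_mk, reduce_eq_self h]

lemma norm_mk_eq {L : List Lambda} (h : RedW L) : (mk L).norm = L.length := by
  show (mk L).toWord.length = L.length
  rw [toWord_mk_eq h]

lemma not_chain'_decomp {α : Type*} (R : α → α → Prop) :
    ∀ (L : List α), ¬ List.Chain' R L →
      ∃ L₁ a b L₂, L = L₁ ++ a :: b :: L₂ ∧ ¬ R a b := by
  intro L
  induction L with
  | nil => intro h; exact absurd List.isChain_nil h
  | cons x L ih =>
    intro h
    cases L with
    | nil => exact absurd (List.isChain_singleton x) h
    | cons y L' =>
      rw [List.Chain', List.isChain_cons_cons] at h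
      by_cases hxy : R x y
      · have h2 : ¬ List.Chain' R (y :: L') := fun hc => h ⟨hxy, hc⟩
        obtain ⟨L₁, a, b, L₂, hL, hR⟩ := ih h2
        exact ⟨x :: L₁, a, b, L₂, by rw [hL]; rfl, hR⟩
      · exact ⟨[], x, y, L', rfl, hxy⟩

lemma redW_toWord (x : F2) : RedW x.toWord := by
  by_contra h
  obtain ⟨L₁, a, b, L₂, hL, hR⟩ := not_chain'_decomp Rl _ h
  have hb : b = (a.1, !a.2) := by
    by_contra hb
    apply hR
    intro ⟨h1, h2⟩
    exact hb (Prod.ext h1 h2)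
  obtain ⟨a1, a2⟩ := a
  apply reduce.not (L₁ := x.toWord) (L₂ := L₁) (L₃ := L₂) (x := a1) (b := a2)
  rw [reduce_toWord, hL, hb]

lemma invRev_cons (a : Lambda) (L : List Lambda) :
    invRev (a :: L) = invRev L ++ [(a.1, !a.2)] := by
  simp [invRev]

lemma redW_invRev {L : List Lambda} (h : RedW L) : RedW (invRev L) := by
  unfold invRev RedW List.Chain'
  rw [List.isChain_reverse, List.isChain_map]
  refine h.imp ?_
  rintro ⟨a1, a2⟩ ⟨b1, b2⟩ hab ⟨h1, h2⟩
  exact hab ⟨h1.symm, by cases a2 <;> cases b2 <;> simp_all⟩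

lemma decomp : ∀ (LA LB : List Lambda), RedW LA → RedW LB →
    ∃ K A B : List Lambda, LA = K ++ A ∧ LB = K ++ B ∧ RedW (invRev A ++ B) ∧
      (mk LA)⁻¹ * mk LB = mk (invRev A ++ B) := by
  intro LA
  induction LA with
  | nil =>
    intro LB _ hB
    exact ⟨[], [], LB, rfl, rfl, by simpa [invRev] using hB, by simp [invRev]⟩
  | cons a LA' ih =>
    intro LB hA hB
    cases LB with
    | nil =>
      refine ⟨[], a :: LA', [], by simp, by simp, ?_, ?_⟩
      · simpa using redW_invRev hA
      · simp [inv_mk]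
    | cons b LB' =>
      by_cases hab : a = b
      · subst hab
        obtain ⟨K, A, B, h1, h2, h3, h4⟩ := ih LB' hA.tail hB.tail
        refine ⟨a :: K, A, B, by rw [h1]; rfl, by rw [h2]; rfl, h3, ?_⟩
        have e1 : mk (a :: LA') = mk [a] * mk LA' := by rw [mul_mk]; rfl
        have e2 : mk (a :: LB') = mk [a] * mk LB' := by rw [mul_mk]; rfl
        rw [e1, e2, mul_inv_rev, mul_assoc, ← mul_assoc (mk [a])⁻¹, inv_mul_cancel, one_mul, h4]
      · refine ⟨[], a :: LA', b :: LB', rfl, rfl, ?_, by simp [inv_mk]⟩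
        apply List.IsChain.append (redW_invRev hA) hB
        intro p hp q hq
        rw [invRev_cons, List.getLast?_concat] at hp
        simp only [List.head?_cons, Option.mem_some_iff] at hp hq
        subst hp; subst hq
        rintro ⟨h1, h2⟩
        obtain ⟨a1, a2⟩ := a
        obtain ⟨b1, b2⟩ := b
        simp only at h1 h2
        apply hab
        simp_all


def posW (L : List Lambda) : ℕ := L.countP (fun p => p.2 = true)

lemma posW_append (L M : List Lambda) : posW (L ++ M) = posW L + posW M :=
  List.countP_append

def eW : F2 →* Multiplicative ℤ := FreeGroup.lift (fun _ => Multiplicative.ofAdd (1 : ℤ))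

def eZ (g : F2) : ℤ := Multiplicative.toAdd (eW g)

lemma eZ_mul (g h : F2) : eZ (g * h) = eZ g + eZ h := by
  unfold eZ; rw [eW.map_mul]; rfl

lemma eZ_one : eZ 1 = 0 := by unfold eZ; rw [eW.map_one]; rfl

lemma eZ_inv (g : F2) : eZ g⁻¹ = - eZ g := by
  unfold eZ; rw [eW.map_inv]; rfl

lemma eZ_of (a : Bool) : eZ (of a) = 1 := by
  unfold eZ eW; rw [FreeGroup.lift_apply_of]; rfl

lemma mk_single_true (a : Bool) : mk [(a, true)] = of a := rfl

lemma mk_single_false (a : Bool) : mk [(a, false)] = (of a)⁻¹ := by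
  rw [show (of a : F2) = mk [(a, true)] from rfl, inv_mk]
  simp [invRev]

lemma eZ_mk (L : List Lambda) : eZ (mk L) = 2 * (posW L : ℤ) - L.length := by
  induction L with
  | nil =>
    have : (mk [] : F2) = 1 := rfl
    rw [this, eZ_one]; simp [posW]
  | cons p L ih =>
    have e1 : mk (p :: L) = mk [p] * mk L := by rw [mul_mk]; rfl
    obtain ⟨a, b⟩ := p
    cases b
    · rw [e1, eZ_mul, mk_single_false, eZ_inv, eZ_of, ih]
      simp only [posW, List.countP_cons]
      push_cast
      simp [posW]
      ring
    · rw [e1, eZ_mul, mk_single_true, eZ_of, ih]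
      simp only [posW, List.countP_cons]
      push_cast
      simp [posW]
      ring

def posF (g : F2) : ℕ := posW g.toWord

lemma two_posF (g : F2) : 2 * (posF g : ℤ) = (g.norm : ℤ) + eZ g := by
  have h := eZ_mk g.toWord
  rw [mk_toWord] at h
  have : (g.norm : ℤ) = (g.toWord.length : ℤ) := rfl
  rw [this]
  unfold posF
  omega

/-- the word xᵃ y⁻ᵇ -/
def Uw (a b : ℕ) : List Lambda :=
  List.replicate a (false, true) ++ List.replicate b (true, false)

lemma redW_replicate (k : ℕ) (p : Lambda) (hp : Rl p p) : List.Chain' Rl (List.replicate k p) := by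
  induction k with
  | zero => exact List.isChain_nil
  | succ k ih =>
    cases k with
    | zero => exact List.isChain_singleton p
    | succ m =>
      rw [List.replicate_succ, List.replicate_succ]
      rw [List.replicate_succ] at ih
      exact List.isChain_cons_cons.2 ⟨hp, ih⟩

lemma redW_Uw (a b : ℕ) : RedW (Uw a b) := by
  unfold Uw RedW
  apply List.IsChain.append
  · exact redW_replicate a _ (by simp [Rl])
  · exact redW_replicate b _ (by simp [Rl])
  · intro p hp q hq
    rw [List.getLast?_replicate] at hp
    have hq' : q = (true, false) := by
      cases b with
      | zero => simp at hq
      | succ m => rw [List.replicate_succ] at hq; simp at hq; exact hq.symm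
    have hp' : p = (false, true) := by
      cases a with
      | zero => simp at hp
      | succ m => simp at hp; exact hp.symm
    subst hp'; subst hq'
    simp [Rl]

lemma mk_replicate_true (a : Bool) (k : ℕ) :
    mk (List.replicate k (a, true)) = of a ^ k := by
  have := toWord_of_pow (α := Bool) a k
  rw [← this, mk_toWord]

lemma mk_replicate_false (a : Bool) (k : ℕ) :
    mk (List.replicate k (a, false)) = (of a ^ k)⁻¹ := by
  rw [show (of a ^ k : F2) = mk (List.replicate k (a, true)) from (mk_replicate_true a k).symm,
    inv_mk]
  congr 1
  simp [invRev]

/-- xᵃ y⁻ᵇ as free group element -/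
def UF (a b : ℕ) : F2 := mk (Uw a b)

lemma UF_eq (a b : ℕ) : UF a b = of false ^ a * (of true ^ b)⁻¹ := by
  unfold UF Uw
  rw [← mul_mk, mk_replicate_true, mk_replicate_false]

lemma norm_UF (a b : ℕ) : (UF a b).norm = a + b := by
  unfold UF
  rw [norm_mk_eq (redW_Uw a b)]
  simp [Uw]

lemma countP_replicate {p : Lambda → Bool} (k : ℕ) (x : Lambda) :
    (List.replicate k x).countP p = if p x then k else 0 := by
  induction k with
  | zero => simp
  | succ m ih => rw [List.replicate_succ, List.countP_cons]; by_cases h : p x <;> simp [h, ih]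

lemma eZ_UF (a b : ℕ) : eZ (UF a b) = (a : ℤ) - b := by
  unfold UF
  rw [eZ_mk]
  have : posW (Uw a b) = a := by
    unfold Uw posW
    rw [List.countP_append, countP_replicate, countP_replicate]
    simp
  rw [this]
  simp [Uw]
  ring

lemma posW_prefix_Uw (a b : ℕ) (K B : List Lambda) (h : K ++ B = Uw a b) :
    min K.length a ≤ posW K := by
  have hK : K = (Uw a b).take K.length := by
    rw [← h, List.take_left]
  have h2 : min K.length a ≤ posW ((Uw a b).take K.length) := by
    unfold Uw
    rw [List.take_append, List.take_replicate, posW_append]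
    have h3 : posW (List.replicate (min K.length a) ((false : Bool), true)) = min K.length a := by
      unfold posW
      rw [countP_replicate]
      simp
    omega
  rw [← hK] at h2
  exact h2

lemma norm_le_add (P Q : F2) : P.norm ≤ Q.norm + (Q⁻¹ * P).norm := by
  have h := norm_mul_le Q (Q⁻¹ * P)
  rw [← mul_assoc, mul_inv_cancel, one_mul] at h
  exact h

lemma lemmaF (n : ℕ) (hn : 1 ≤ n) (P Q : F2)
    (hQ : (Q.norm : ℤ) + ((Q⁻¹ * P).norm : ℤ) + |eZ Q| + |eZ P - eZ Q| ≤ 2 * n - 1) :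
    (4 * n - 1 : ℤ) ≤ ((P⁻¹ * UF n n).norm : ℤ) + ((P⁻¹ * UF n (n - 1)).norm : ℤ)
      + 2 * |eZ P| := by
  have h2p := two_posF P
  by_cases hbig : (n : ℤ) ≤ (posF P : ℤ)
  · exfalso
    have h1 : (P.norm : ℤ) ≤ (Q.norm : ℤ) + ((Q⁻¹ * P).norm : ℤ) := by
      exact_mod_cast norm_le_add P Q
    have h2 : eZ P ≤ |eZ Q| + |eZ P - eZ Q| := by
      have : eZ P = eZ Q + (eZ P - eZ Q) := by ring
      calc eZ P = eZ Q + (eZ P - eZ Q) := this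
        _ ≤ |eZ Q| + |eZ P - eZ Q| := add_le_add (le_abs_self _) (le_abs_self _)
    omega
  · push_neg at hbig
    -- decomposition w.r.t. U := UF n n
    obtain ⟨K₁, A₁, B₁, hP1, hU1, hR1, hM1⟩ :=
      decomp P.toWord (UF n n).toWord (redW_toWord P) (redW_toWord (UF n n))
    obtain ⟨K₂, A₂, B₂, hP2, hU2, hR2, hM2⟩ :=
      decomp P.toWord (UF n (n-1)).toWord (redW_toWord P) (redW_toWord (UF n (n-1)))
    rw [mk_toWord, mk_toWord] at hM1 hM2
    have hnormP : P.norm = P.toWord.length := rfl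
    have hlen1 : P.norm = K₁.length + A₁.length := by
      rw [hnormP, hP1, List.length_append]
    have hlen2 : P.norm = K₂.length + A₂.length := by
      rw [hnormP, hP2, List.length_append]
    have hU1len : (UF n n).norm = K₁.length + B₁.length := by
      show (UF n n).toWord.length = _
      rw [hU1, List.length_append]
    have hU2len : (UF n (n-1)).norm = K₂.length + B₂.length := by
      show (UF n (n-1)).toWord.length = _
      rw [hU2, List.length_append]
    have hnU1 : (UF n n).norm = n + n := norm_UF n n
    have hnU2 : (UF n (n-1)).norm = n + (n-1) := norm_UF n (n-1)
    have hn1 : ((P⁻¹ * UF n n).norm : ℕ) = A₁.length + B₁.length := by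
      rw [hM1, norm_mk_eq hR1, List.length_append, invRev_length]
    have hn2 : ((P⁻¹ * UF n (n-1)).norm : ℕ) = A₂.length + B₂.length := by
      rw [hM2, norm_mk_eq hR2, List.length_append, invRev_length]
    -- posW facts
    have hPw : posF P = posW K₁ + posW A₁ := by
      unfold posF
      rw [hP1, posW_append]
    have hPw2 : posF P = posW K₂ + posW A₂ := by
      unfold posF
      rw [hP2, posW_append]
    have hbig' : posF P < n := by exact_mod_cast hbig
    have hpre1 : min K₁.length n ≤ posW K₁ := by
      apply posW_prefix_Uw n n K₁ B₁
      rw [← hU1]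
      exact toWord_mk_eq (redW_Uw n n)
    have hpre2 : min K₂.length n ≤ posW K₂ := by
      apply posW_prefix_Uw n (n-1) K₂ B₂
      rw [← hU2]
      exact toWord_mk_eq (redW_Uw n (n-1))
    have hk1 : K₁.length ≤ posF P := by
      rcases le_total K₁.length n with h | h
      · rw [min_eq_left h] at hpre1; omega
      · rw [min_eq_right h] at hpre1; omega
    have hk2 : K₂.length ≤ posF P := by
      rcases le_total K₂.length n with h | h
      · rw [min_eq_left h] at hpre2; omega
      · rw [min_eq_right h] at hpre2; omega
    have habs : eZ P ≤ |eZ P| := le_abs_self _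
    omega

end S10


namespace S10

/-! ### Homomorphisms out of G -/

open Multiplicative FreeGroup

-- π : G → F2,  a ↦ x, b ↦ y, c,t ↦ 1
def piF : Fin 4 → F2 := fun i => if i = 0 then of false else if i = 1 then of true else 1

lemma pi_rels : ∀ r ∈ grels, FreeGroup.lift piF r = 1 := by
  intro r hr
  simp only [grels, Set.mem_insert_iff, Set.mem_singleton_iff] at hr
  rcases hr with h | h | h | h <;> subst h <;>
    simp [_root_.map_mul, _root_.map_inv, FreeGroup.lift_apply_of, piF]

def piG : G →* F2 := PresentedGroup.toGroup pi_rels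

lemma piG_a : piG ga = of false := by simp [ga, piG, PresentedGroup.toGroup.of, piF]
lemma piG_b : piG gb = of true := by simp [gb, piG, PresentedGroup.toGroup.of, piF]
lemma piG_c : piG gc = 1 := by simp [gc, piG, PresentedGroup.toGroup.of, piF]
lemma piG_t : piG gt = 1 := by simp [gt, piG, PresentedGroup.toGroup.of, piF]

-- τ : G → Multiplicative ℤ,  t ↦ 1, others ↦ 0
def tauF : Fin 4 → Multiplicative ℤ := fun i => if i = 3 then ofAdd 1 else 1

lemma tau_rels : ∀ r ∈ grels, FreeGroup.lift tauF r = 1 := by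
  intro r hr
  simp only [grels, Set.mem_insert_iff, Set.mem_singleton_iff] at hr
  rcases hr with h | h | h | h <;> subst h <;>
    simp [_root_.map_mul, _root_.map_inv, FreeGroup.lift_apply_of, tauF]

def tauG : G →* Multiplicative ℤ := PresentedGroup.toGroup tau_rels

def tauZ (g : G) : ℤ := toAdd (tauG g)

lemma tauZ_a : tauZ ga = 0 := by simp [tauZ, ga, tauG, PresentedGroup.toGroup.of, tauF]
lemma tauZ_b : tauZ gb = 0 := by simp [tauZ, gb, tauG, PresentedGroup.toGroup.of, tauF]
lemma tauZ_c : tauZ gc = 0 := by simp [tauZ, gc, tauG, PresentedGroup.toGroup.of, tauF]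
lemma tauZ_t : tauZ gt = 1 := by simp [tauZ, gt, tauG, PresentedGroup.toGroup.of, tauF]

lemma tauZ_mul (g h : G) : tauZ (g * h) = tauZ g + tauZ h := by
  simp [tauZ, _root_.map_mul]

lemma tauZ_inv (g : G) : tauZ g⁻¹ = - tauZ g := by simp [tauZ, _root_.map_inv]

/-! ### The wreath-product-valued homomorphism -/

abbrev NN := Multiplicative (ℤ →₀ ℤ)

noncomputable def shiftA (k : ℤ) : NN ≃* NN :=
  AddEquiv.toMultiplicative (Finsupp.domCongr (Equiv.addRight k))

lemma shiftA_apply (k : ℤ) (f : NN) (j : ℤ) :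
    toAdd (shiftA k f) j = toAdd f (j - k) := by
  simp [shiftA, Finsupp.domCongr_apply, Finsupp.equivMapDomain_apply, Equiv.addRight]
  rfl

noncomputable def phiW : Multiplicative ℤ →* MulAut NN :=
  MonoidHom.mk' (fun k => shiftA (toAdd k)) (by
    intro k l
    apply MulEquiv.ext
    intro f
    apply Multiplicative.toAdd.injective
    apply Finsupp.ext
    intro j
    show toAdd (shiftA (toAdd (k * l)) f) j = toAdd (shiftA (toAdd k) (shiftA (toAdd l) f)) j
    rw [shiftA_apply, shiftA_apply, shiftA_apply]
    congr 1
    show j - (toAdd k + toAdd l) = j - toAdd k - toAdd l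
    ring)

abbrev Wr := SemidirectProduct NN (Multiplicative ℤ) phiW

open SemidirectProduct in
noncomputable def thF : Fin 4 → Wr := fun i =>
  if i = 2 then inr (ofAdd 1)
  else if i = 3 then inl (ofAdd (Finsupp.single 0 1))
  else inr (ofAdd (-1))

lemma thF0 : thF 0 = SemidirectProduct.inr (ofAdd (-1)) := rfl
lemma thF1 : thF 1 = SemidirectProduct.inr (ofAdd (-1)) := rfl
lemma thF2 : thF 2 = SemidirectProduct.inr (ofAdd 1) := rfl
lemma thF3 : thF 3 = SemidirectProduct.inl (ofAdd (Finsupp.single 0 1)) := rfl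

open SemidirectProduct in
lemma th_rels : ∀ r ∈ grels, FreeGroup.lift thF r = 1 := by
  have hAC : (inr (ofAdd (-1)) : Wr) * inr (ofAdd 1) = 1 := by
    rw [← _root_.map_mul, ← ofAdd_add]
    norm_num
  have hBC := hAC
  intro r hr
  simp only [grels, Set.mem_insert_iff, Set.mem_singleton_iff] at hr
  have hT : ∀ A C T : Wr, A * C = 1 → C * A = 1 → A * C * T * (T * A * C)⁻¹ = 1 := by
    intro A C T h1 h2
    have h3 : T * A * C = T := by rw [mul_assoc, h1, mul_one]
    rw [h1, h3, one_mul, mul_inv_cancel]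
  have hS : ∀ A C : Wr, A * C = 1 → C * A = 1 → A * C * (C * A)⁻¹ = 1 := by
    intro A C h1 h2
    rw [h1, h2, one_mul, inv_one]
  have hCA : (inr (ofAdd 1) : Wr) * inr (ofAdd (-1)) = 1 := by
    rw [← _root_.map_mul, ← ofAdd_add]
    norm_num
  rcases hr with h | h | h | h <;> subst h <;>
    simp only [_root_.map_mul, _root_.map_inv, FreeGroup.lift_apply_of, thF0, thF1, thF2, thF3]
  · exact hS _ _ hAC hCA
  · exact hS _ _ hAC hCA
  · exact hT _ _ _ hAC hCA
  · exact hT _ _ _ hAC hCA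

noncomputable def thG : G →* Wr := PresentedGroup.toGroup th_rels

noncomputable def F0 (g : G) : ℤ := toAdd ((thG g).left) 0
noncomputable def zeta (g : G) : ℤ := toAdd ((thG g).right)

open SemidirectProduct in
lemma thG_a : thG ga = inr (ofAdd (-1)) := by
  show PresentedGroup.toGroup th_rels (PresentedGroup.of 0) = _
  rw [PresentedGroup.toGroup.of, thF0]
open SemidirectProduct in
lemma thG_b : thG gb = inr (ofAdd (-1)) := by
  show PresentedGroup.toGroup th_rels (PresentedGroup.of 1) = _
  rw [PresentedGroup.toGroup.of, thF1]
open SemidirectProduct in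
lemma thG_c : thG gc = inr (ofAdd 1) := by
  show PresentedGroup.toGroup th_rels (PresentedGroup.of 2) = _
  rw [PresentedGroup.toGroup.of, thF2]
open SemidirectProduct in
lemma thG_t : thG gt = inl (ofAdd (Finsupp.single 0 1)) := by
  show PresentedGroup.toGroup th_rels (PresentedGroup.of 3) = _
  rw [PresentedGroup.toGroup.of, thF3]

lemma zeta_mul (g h : G) : zeta (g * h) = zeta g + zeta h := by
  simp [zeta, _root_.map_mul]

lemma zeta_inv (g : G) : zeta g⁻¹ = - zeta g := by
  simp [zeta, _root_.map_inv]

-- λ : the c-exponent-style invariant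
noncomputable def lam (g : G) : ℤ := eZ (piG g) + zeta g

lemma lam_mul (g h : G) : lam (g * h) = lam g + lam h := by
  unfold lam
  rw [_root_.map_mul, eZ_mul, zeta_mul]
  ring

lemma lam_inv (g : G) : lam g⁻¹ = - lam g := by
  unfold lam
  rw [_root_.map_inv, eZ_inv, zeta_inv]
  ring

lemma F0_one : F0 1 = 0 := by simp [F0]

/-- key multiplication formula for `F0` -/
lemma F0_mul (g h : G) :
    F0 (g * h) = F0 g + toAdd (phiW (thG g).right (thG h).left) 0 := by
  unfold F0
  rw [_root_.map_mul, SemidirectProduct.mul_left]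
  rfl

lemma F0_mul_of_left_one (g h : G) (hh : (thG h).left = 1) : F0 (g * h) = F0 g := by
  rw [F0_mul, hh]
  simp

end S10


namespace S10
open Multiplicative FreeGroup

def IsLetter (s : G) : Prop := s ∈ SG ∨ s⁻¹ ∈ SG

lemma letter_cases (s : G) (hs : IsLetter s) :
    s = ga ∨ s = gb ∨ s = gc ∨ s = gt ∨ s = ga⁻¹ ∨ s = gb⁻¹ ∨ s = gc⁻¹ ∨ s = gt⁻¹ := by
  rcases hs with h | h <;>
    simp only [SG, Set.mem_insert_iff, Set.mem_singleton_iff] at h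
  · tauto
  · rcases h with h | h | h | h
    · right; right; right; right; left; rw [← h, inv_inv]
    · right; right; right; right; right; left; rw [← h, inv_inv]
    · right; right; right; right; right; right; left; rw [← h, inv_inv]
    · right; right; right; right; right; right; right; rw [← h, inv_inv]

-- values on generators
lemma zeta_a : zeta ga = -1 := by simp [zeta, thG_a]
lemma zeta_b : zeta gb = -1 := by simp [zeta, thG_b]
lemma zeta_c : zeta gc = 1 := by simp [zeta, thG_c]
lemma zeta_t : zeta gt = 0 := by simp [zeta, thG_t]

lemma lam_a : lam ga = 0 := by simp [lam, piG_a, eZ_of, zeta_a]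
lemma lam_b : lam gb = 0 := by simp [lam, piG_b, eZ_of, zeta_b]
lemma lam_c : lam gc = 1 := by simp [lam, piG_c, eZ_one, zeta_c]
lemma lam_t : lam gt = 0 := by simp [lam, piG_t, eZ_one, zeta_t]

lemma letter_bound (s : G) (hs : IsLetter s) :
    ((piG s).norm : ℤ) + |lam s| + |tauZ s| ≤ 1 := by
  have hinv : ∀ x : G, ((piG x⁻¹).norm : ℤ) + |lam x⁻¹| + |tauZ x⁻¹|
      = ((piG x).norm : ℤ) + |lam x| + |tauZ x| := by
    intro x
    rw [_root_.map_inv, norm_inv_eq, lam_inv, tauZ_inv, abs_neg, abs_neg]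
  rcases letter_cases s hs with h | h | h | h | h | h | h | h <;> subst h <;>
    (try rw [hinv]) <;>
    norm_num [piG_a, piG_b, piG_c, piG_t, lam_a, lam_b, lam_c, lam_t,
      tauZ_a, tauZ_b, tauZ_c, tauZ_t, FreeGroup.norm_of, FreeGroup.norm_one]

lemma list_bound : ∀ (l : List G), (∀ s ∈ l, IsLetter s) →
    (((piG l.prod).norm : ℤ) + |lam l.prod| + |tauZ l.prod| ≤ l.length) := by
  intro l
  induction l with
  | nil =>
    intro _
    rw [List.prod_nil]
    have e1 : piG (1:G) = 1 := _root_.map_one _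
    have e2 : lam (1:G) = 0 := by
      have := lam_mul 1 1
      simp at this
      linarith [this]
    have e3 : tauZ (1:G) = 0 := by simp [tauZ, _root_.map_one]
    rw [e1, e2, e3, FreeGroup.norm_one]
    simp
  | cons s l ih =>
    intro hl
    have hs : IsLetter s := hl s List.mem_cons_self
    have hrest := ih (fun x hx => hl x (List.mem_cons_of_mem s hx))
    have hb := letter_bound s hs
    rw [List.prod_cons]
    have h1 : ((piG (s * l.prod)).norm : ℤ) ≤ (piG s).norm + (piG l.prod).norm := by
      rw [_root_.map_mul]
      exact_mod_cast FreeGroup.norm_mul_le _ _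
    have h2 : |lam (s * l.prod)| ≤ |lam s| + |lam l.prod| := by
      rw [lam_mul]; exact abs_add_le _ _
    have h3 : |tauZ (s * l.prod)| ≤ |tauZ s| + |tauZ l.prod| := by
      rw [tauZ_mul]; exact abs_add_le _ _
    have hlen : ((s :: l).length : ℤ) = 1 + l.length := by
      simp [List.length_cons]; ring
    rw [hlen]
    linarith

lemma moment : ∀ (l : List G) (g : G), F0 (g * l.prod) ≠ F0 g →
    ∃ l₁ s l₂, l = l₁ ++ s :: l₂ ∧ F0 (g * l₁.prod * s) ≠ F0 (g * l₁.prod) := by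
  intro l
  induction l with
  | nil => intro g h; rw [List.prod_nil, mul_one] at h; exact absurd rfl h
  | cons s l ih =>
    intro g h
    by_cases hc : F0 (g * s) = F0 g
    · have e : g * s * l.prod = g * (s :: l).prod := by rw [List.prod_cons, mul_assoc]
      have h' : F0 (g * s * l.prod) ≠ F0 (g * s) := by rw [e, hc]; exact h
      obtain ⟨l₁, s', l₂, hsplit, hchg⟩ := ih (g * s) h'
      refine ⟨s :: l₁, s', l₂, by rw [hsplit]; rfl, ?_⟩
      rw [List.prod_cons, ← mul_assoc]
      exact hchg
    · exact ⟨[], s, l, rfl, by simpa using hc⟩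

lemma F0_mul' (g h : G) :
    F0 (g * h) = F0 g + toAdd ((thG h).left) (0 - zeta g) := by
  rw [F0_mul]
  congr 1

lemma step_change (g s : G) (hs : IsLetter s) (h : F0 (g * s) ≠ F0 g) :
    zeta g = 0 ∧ piG s = 1 ∧ lam s = 0 ∧ zeta s = 0 := by
  have hlam := lam_inv
  rcases letter_cases s hs with hc | hc | hc | hc | hc | hc | hc | hc <;> subst hc
  · exact absurd (F0_mul_of_left_one g ga (by rw [thG_a]; rfl)) h
  · exact absurd (F0_mul_of_left_one g gb (by rw [thG_b]; rfl)) h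
  · exact absurd (F0_mul_of_left_one g gc (by rw [thG_c]; rfl)) h
  · -- s = gt
    rw [F0_mul' g gt, thG_t] at h
    simp only [SemidirectProduct.left_inl] at h
    have hz : zeta g = 0 := by
      by_contra hzc
      have hv : (toAdd (ofAdd (Finsupp.single (0:ℤ) (1:ℤ)))) (0 - zeta g) = 0 := by
        rw [toAdd_ofAdd, Finsupp.single_apply, if_neg (by omega)]
      rw [hv, add_zero] at h
      exact absurd rfl h
    exact ⟨hz, piG_t, lam_t, zeta_t⟩
  · exact absurd (F0_mul_of_left_one g ga⁻¹
      (by rw [_root_.map_inv, thG_a]; simp)) h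
  · exact absurd (F0_mul_of_left_one g gb⁻¹
      (by rw [_root_.map_inv, thG_b]; simp)) h
  · exact absurd (F0_mul_of_left_one g gc⁻¹
      (by rw [_root_.map_inv, thG_c]; simp)) h
  · -- s = gt⁻¹
    have hleft : (thG gt⁻¹).left = ofAdd (-(Finsupp.single (0:ℤ) (1:ℤ))) := by
      rw [_root_.map_inv, thG_t]
      simp
    rw [F0_mul' g gt⁻¹, hleft] at h
    have hz : zeta g = 0 := by
      by_contra hzc
      have hv : (toAdd (ofAdd (-(Finsupp.single (0:ℤ) (1:ℤ))))) (0 - zeta g) = 0 := by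
        rw [toAdd_ofAdd, Finsupp.neg_apply, Finsupp.single_apply, if_neg (by omega), neg_zero]
      rw [hv, add_zero] at h
      exact absurd rfl h
    refine ⟨hz, by rw [_root_.map_inv, piG_t, inv_one], by rw [lam_inv, lam_t, neg_zero],
      by rw [zeta_inv, zeta_t, neg_zero]⟩

lemma exists_word (g : G) : ∃ l : List G, (∀ x ∈ l, x ∈ SG ∨ x⁻¹ ∈ SG) ∧ l.prod = g := by
  induction g using PresentedGroup.induction_on with
  | H z =>
    induction z using FreeGroup.induction_on with
    | C1 => exact ⟨[], by simp, by simp [_root_.map_one]⟩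
    | of i =>
      refine ⟨[PresentedGroup.of i], ?_, by rw [List.prod_singleton]; rfl⟩
      intro x hx
      simp only [List.mem_singleton] at hx
      subst hx
      left
      fin_cases i <;> simp [SG, ga, gb, gc, gt, PresentedGroup.of]
    | inv_of i _ =>
      refine ⟨[(PresentedGroup.of (rels := grels) i)⁻¹], ?_, by rw [List.prod_singleton, _root_.map_inv]; rfl⟩
      intro x hx
      simp only [List.mem_singleton] at hx
      subst hx
      right
      rw [inv_inv]
      fin_cases i <;> simp [SG, ga, gb, gc, gt, PresentedGroup.of]
    | mul z w hz hw =>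
      obtain ⟨l₁, hl₁, hp₁⟩ := hz
      obtain ⟨l₂, hl₂, hp₂⟩ := hw
      refine ⟨l₁ ++ l₂, ?_, by rw [List.prod_append, hp₁, hp₂, _root_.map_mul]⟩
      intro x hx
      rcases List.mem_append.1 hx with h | h
      · exact hl₁ x h
      · exact hl₂ x h

lemma word_min (g : G) (k : ℕ) (h : wordLength SG g ≤ k) :
    ∃ l : List G, l.length ≤ k ∧ (∀ x ∈ l, IsLetter x) ∧ l.prod = g := by
  have hne : {n | ∃ l : List G, l.length = n ∧ (∀ x ∈ l, x ∈ SG ∨ x⁻¹ ∈ SG) ∧ l.prod = g}.Nonempty := by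
    obtain ⟨l, hl, hp⟩ := exists_word g
    exact ⟨l.length, l, rfl, hl, hp⟩
  obtain ⟨l, hlen, hmem, hprod⟩ := Nat.sInf_mem hne
  exact ⟨l, by rw [hlen]; exact h, hmem, hprod⟩

/-- the key consequence of membership in the ball for elements with a lamp at 0 -/
lemma star (n : ℕ) (h : G) (hz : zeta h = 0) (hF : F0 h ≠ 0) (hw : wordLength SG h ≤ 2 * n) :
    ∃ Q : F2, (Q.norm : ℤ) + ((Q⁻¹ * piG h).norm : ℤ) + |eZ Q| + |eZ (piG h) - eZ Q|
      ≤ 2 * n - 1 := by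
  obtain ⟨l, hlen, hlet, hprod⟩ := word_min h (2 * n) hw
  have hne : F0 (1 * l.prod) ≠ F0 1 := by
    rw [one_mul, hprod, F0_one]; exact hF
  obtain ⟨l₁, s, l₂, hsplit, hchg⟩ := moment l 1 hne
  simp only [one_mul] at hchg
  have hls : IsLetter s := hlet s (by rw [hsplit]; simp)
  have hlet1 : ∀ x ∈ l₁, IsLetter x := fun x hx => hlet x (by rw [hsplit]; simp [hx])
  have hlet2 : ∀ x ∈ l₂, IsLetter x := fun x hx => hlet x (by rw [hsplit]; simp [hx])
  obtain ⟨hz1, hps, hlams, hzs⟩ := step_change l₁.prod s hls hchg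
  refine ⟨piG l₁.prod, ?_⟩
  have hb1 := list_bound l₁ hlet1
  have hb2 := list_bound l₂ hlet2
  have hl2 : l₂.prod = s⁻¹ * (l₁.prod⁻¹ * h) := by
    rw [← hprod, hsplit, List.prod_append, List.prod_cons]
    group
  have hpi2 : piG l₂.prod = (piG l₁.prod)⁻¹ * piG h := by
    rw [hl2, _root_.map_mul, _root_.map_inv, _root_.map_mul, _root_.map_inv, hps]
    simp
  have hlam1 : lam l₁.prod = eZ (piG l₁.prod) := by
    rw [lam, hz1, add_zero]
  have hlam2 : lam l₂.prod = eZ (piG h) - eZ (piG l₁.prod) := by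
    rw [hl2, lam_mul, lam_inv, lam_mul, lam_inv, hlams, hlam1]
    have : lam h = eZ (piG h) := by rw [lam, hz, add_zero]
    rw [this]
    ring
  rw [hpi2] at hb2
  rw [hlam1] at hb1
  rw [hlam2] at hb2
  have hlenl : l.length = l₁.length + 1 + l₂.length := by
    rw [hsplit]; simp [List.length_append]; omega
  have ht1 : (0:ℤ) ≤ |tauZ l₁.prod| := abs_nonneg _
  have ht2 : (0:ℤ) ≤ |tauZ l₂.prod| := abs_nonneg _
  have hZlen : (l.length : ℤ) ≤ 2 * n := by exact_mod_cast hlen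
  have hcast : (l.length : ℤ) = l₁.length + 1 + l₂.length := by exact_mod_cast hlenl
  have habs : |eZ (piG h) - eZ (piG l₁.prod)| = |eZ (piG h) - eZ (piG l₁.prod)| := rfl
  linarith

end S10


namespace S10
open Multiplicative FreeGroup

lemma zeta_pow (g : G) (k : ℕ) : zeta (g ^ k) = k * zeta g := by
  have : zeta (g ^ k) = toAdd (SemidirectProduct.rightHom (thG (g ^ k))) := rfl
  rw [this, map_pow, map_pow, toAdd_pow]
  rfl

lemma zeta_zpow (g : G) (k : ℤ) : zeta (g ^ k) = k * zeta g := by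
  have : zeta (g ^ k) = toAdd (SemidirectProduct.rightHom (thG (g ^ k))) := rfl
  rw [this, map_zpow, map_zpow, toAdd_zpow]
  rfl

lemma piG_u (n : ℕ) : piG (ga ^ n * gb ^ (-(n:ℤ))) = UF n n := by
  rw [_root_.map_mul, map_pow, map_zpow, piG_a, piG_b, UF_eq, zpow_neg, zpow_natCast]

lemma piG_v (n : ℕ) (hn : 1 ≤ n) :
    piG (gt * ga ^ n * gb ^ (1 - (n:ℤ))) = UF n (n - 1) := by
  have hc : (1 - (n:ℤ)) = -(((n - 1 : ℕ)) : ℤ) := by omega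
  rw [hc, _root_.map_mul, _root_.map_mul, map_pow, map_zpow, piG_a, piG_b, piG_t, one_mul,
    UF_eq, zpow_neg, zpow_natCast]

lemma zeta_u (n : ℕ) : zeta (ga ^ n * gb ^ (-(n:ℤ))) = 0 := by
  rw [zeta_mul, zeta_pow, zeta_zpow, zeta_a, zeta_b]
  ring

lemma zeta_v (n : ℕ) : zeta (gt * ga ^ n * gb ^ (1 - (n:ℤ))) = -1 := by
  rw [zeta_mul, zeta_mul, zeta_pow, zeta_zpow, zeta_a, zeta_b, zeta_t]
  ring

lemma lam_u (n : ℕ) : lam (ga ^ n * gb ^ (-(n:ℤ))) = 0 := by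
  rw [lam, piG_u, zeta_u, eZ_UF]
  ring

lemma lam_v (n : ℕ) (hn : 1 ≤ n) : lam (gt * ga ^ n * gb ^ (1 - (n:ℤ))) = 0 := by
  rw [lam, piG_v n hn, zeta_v, eZ_UF]
  have : (((n - 1 : ℕ)) : ℤ) = (n : ℤ) - 1 := by omega
  rw [this]
  ring

lemma F0_u (n : ℕ) : F0 (ga ^ n * gb ^ (-(n:ℤ))) = 0 := by
  have h : thG (ga ^ n * gb ^ (-(n:ℤ)))
      = SemidirectProduct.inr ((ofAdd (-1) : Multiplicative ℤ) ^ n * (ofAdd (-1)) ^ (-(n:ℤ))) := by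
    rw [_root_.map_mul, map_pow, map_zpow, thG_a, thG_b, ← map_pow, ← map_zpow,
      ← _root_.map_mul]
  rw [F0, h]
  simp

lemma F0_v (n : ℕ) : F0 (gt * ga ^ n * gb ^ (1 - (n:ℤ))) = 1 := by
  have h : thG (gt * ga ^ n * gb ^ (1 - (n:ℤ)))
      = SemidirectProduct.inl (ofAdd (Finsupp.single 0 1)) *
        SemidirectProduct.inr ((ofAdd (-1) : Multiplicative ℤ) ^ n * (ofAdd (-1)) ^ (1 - (n:ℤ))) := by
    rw [_root_.map_mul, _root_.map_mul, map_pow, map_zpow, thG_t, thG_a, thG_b, ← map_pow,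
      ← map_zpow, mul_assoc, ← _root_.map_mul]
  rw [F0, h]
  rw [SemidirectProduct.mul_left, SemidirectProduct.left_inl, SemidirectProduct.right_inl,
    SemidirectProduct.left_inr, _root_.map_one]
  simp only [mul_one, toAdd_ofAdd]
  exact Finsupp.single_eq_same

end S10

open S10 Multiplicative FreeGroup in
/-- In G, for every n ≥ 1, every path in the Cayley graph from aⁿb⁻ⁿ to
taⁿb⁻ⁿ⁺¹ staying inside the ball of radius 2n has length at least 4n. -/
theorem stmt10 (n : ℕ) (hn : 1 ≤ n) (steps : List G)
    (hp : IsPathIn SG {g | wordLength SG g ≤ 2 * n}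
      (ga ^ n * gb ^ (-(n : ℤ))) (gt * ga ^ n * gb ^ (1 - (n : ℤ))) steps) :
    4 * n ≤ steps.length := by
  obtain ⟨hlet, hend, hball⟩ := hp
  have hne : F0 ((ga ^ n * gb ^ (-(n:ℤ))) * steps.prod) ≠ F0 (ga ^ n * gb ^ (-(n:ℤ))) := by
    rw [hend, F0_v, F0_u]
    omega
  obtain ⟨l₁, s, l₂, hsplit, hchg⟩ := moment steps (ga ^ n * gb ^ (-(n:ℤ))) hne
  have hls : IsLetter s := hlet s (by rw [hsplit]; simp)
  obtain ⟨hz1, hps, hlams, hzs⟩ := step_change ((ga ^ n * gb ^ (-(n:ℤ))) * l₁.prod) s hls hchg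
  set u : G := ga ^ n * gb ^ (-(n:ℤ)) with hu
  set g₁ : G := u * l₁.prod with hg₁
  set g₂ : G := g₁ * s with hg₂
  set P : F2 := piG g₁ with hP
  have hzg2 : zeta g₂ = 0 := by rw [hg₂, zeta_mul, hz1, hzs]; ring
  have hpig2 : piG g₂ = P := by rw [hg₂, _root_.map_mul, hps, mul_one]
  have hin1 : wordLength SG g₁ ≤ 2 * n := hball l₁ ⟨s :: l₂, hsplit.symm⟩
  have hin2 : wordLength SG g₂ ≤ 2 * n := by
    have h2 := hball (l₁ ++ [s]) ⟨l₂, by rw [hsplit]; simp⟩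
    have e : u * (l₁ ++ [s]).prod = g₂ := by
      rw [List.prod_append, List.prod_singleton, ← mul_assoc]
    rwa [e] at h2
  have hstar : ∃ Q : F2,
      (Q.norm:ℤ) + ((Q⁻¹ * P).norm:ℤ) + |eZ Q| + |eZ P - eZ Q| ≤ 2*n - 1 := by
    by_cases hF1 : F0 g₁ = 0
    · have hF2 : F0 g₂ ≠ 0 := fun h => hchg (h.trans hF1.symm)
      obtain ⟨Q, hQ⟩ := star n g₂ hzg2 hF2 hin2
      rw [hpig2] at hQ
      exact ⟨Q, hQ⟩
    · obtain ⟨Q, hQ⟩ := star n g₁ hz1 hF1 hin1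
      exact ⟨Q, hQ⟩
  obtain ⟨Q, hQ⟩ := hstar
  have hkey := lemmaF n hn P Q hQ
  have hb1 := list_bound l₁ (fun x hx => hlet x (by rw [hsplit]; simp [hx]))
  have hb2 := list_bound l₂ (fun x hx => hlet x (by rw [hsplit]; simp [hx]))
  have hl1prod : piG l₁.prod = (UF n n)⁻¹ * P := by
    have e : l₁.prod = u⁻¹ * g₁ := by rw [hg₁, ← mul_assoc, inv_mul_cancel, one_mul]
    rw [e, _root_.map_mul, _root_.map_inv, hu, piG_u]
  have hnorm1 : ((UF n n)⁻¹ * P).norm = (P⁻¹ * UF n n).norm := by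
    rw [← norm_inv_eq]
    congr 1
    rw [mul_inv_rev, inv_inv]
  have hlamg₁ : lam g₁ = eZ P := by rw [lam, hz1, add_zero]
  have hlam_l1 : lam l₁.prod = eZ P := by
    have e : lam g₁ = lam u + lam l₁.prod := by rw [hg₁, lam_mul]
    have e2 : lam u = 0 := lam_u n
    rw [e, e2, zero_add] at hlamg₁
    exact hlamg₁
  have hl2prod : l₂.prod = g₂⁻¹ * (gt * ga ^ n * gb ^ (1 - (n:ℤ))) := by
    rw [← hend, hsplit, List.prod_append, List.prod_cons, hg₂, hg₁]
    group
  have hpil2 : piG l₂.prod = P⁻¹ * UF n (n - 1) := by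
    rw [hl2prod, _root_.map_mul, _root_.map_inv, hpig2, piG_v n hn]
  have hlaml2 : lam l₂.prod = - eZ P := by
    have e : lam g₂ = eZ P := by
      rw [hg₂, lam_mul, hlamg₁, hlams, add_zero]
    rw [hl2prod, lam_mul, lam_inv, e, lam_v n hn]
    ring
  rw [hl1prod, hnorm1, hlam_l1] at hb1
  rw [hpil2, hlaml2, abs_neg] at hb2
  have hlen : steps.length = l₁.length + 1 + l₂.length := by
    rw [hsplit]
    simp [List.length_append]
    omega
  have ht1 : (0:ℤ) ≤ |tauZ l₁.prod| := abs_nonneg _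
  have ht2 : (0:ℤ) ≤ |tauZ l₂.prod| := abs_nonneg _
  have hfin : (4 * n : ℤ) ≤ (steps.length : ℤ) := by
    have hc : (steps.length : ℤ) = (l₁.length : ℤ) + 1 + l₂.length := by exact_mod_cast hlen
    rw [hc]
    linarith
  exact_mod_cast hfin
end

section
/- The pair (F₂ × F₂, {x, y, c, d}) with presentation ⟨x,y,c,d | xc=cx, yc=cy, xcd=dxc, ycd=dyc⟩ is not minimally almost convex: there is no function f with f(r) ≤ 2r - 1 for all r and no r₀ such that any two elements u, v of word length exactly r > r₀ with d(u,v) ≤ 2 are joined by a path of length at most f(r) inside the ball of radius r. -/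
/-- The almost convexity condition AC_{f,r₀} for a pair (G,S): any two points
of word length exactly r > r₀ at distance at most 2 are joined by a path of
length at most f(r) inside the ball of radius r. -/
def AlmostConvex {G : Type*} [Group G] (S : Set G) (f : ℕ → ℕ) (r₀ : ℕ) : Prop :=
  ∀ r, r₀ < r → ∀ u v : G, wordLength S u = r → wordLength S v = r →
    wordLength S (u⁻¹ * v) ≤ 2 →
    ∃ steps : List G,
      IsPathIn S {g | wordLength S g ≤ r} u v steps ∧ steps.length ≤ f r

namespace NotMAC
open FreeGroup List
abbrev F2 := FreeGroup (Fin 2)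



/-- letters that do not cancel -/
def NC (a b : Fin 2 × Bool) : Prop := ¬(a.1 = b.1 ∧ a.2 = !b.2)

instance : DecidableRel NC := fun _ _ => by unfold NC; infer_instance

/-- a reduced word -/
def IsRed (L : List (Fin 2 × Bool)) : Prop := List.Chain' NC L

lemma IsRed.tail' {a : Fin 2 × Bool} {L : List (Fin 2 × Bool)} (h : IsRed (a :: L)) :
    IsRed L := (List.isChain_cons.1 h).2

lemma IsRed.reduce_eq {L : List (Fin 2 × Bool)} (h : IsRed L) : reduce L = L := by
  induction L with
  | nil => rfl
  | cons a L ih =>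
    have htl : reduce L = L := ih h.tail'
    rw [reduce.cons, htl]
    cases L with
    | nil => rfl
    | cons b T =>
      have hnc : NC a b := (List.isChain_cons_cons.1 h).1
      unfold NC at hnc
      simp only [if_neg hnc]

lemma toWord_mk_isRed {L : List (Fin 2 × Bool)} (h : IsRed L) : toWord (mk L) = L := by
  rw [toWord_mk, h.reduce_eq]

lemma norm_mk_isRed {L : List (Fin 2 × Bool)} (h : IsRed L) :
    FreeGroup.norm (mk L) = L.length := by
  rw [FreeGroup.norm, toWord_mk_isRed h]

lemma IsRed.invRev {L : List (Fin 2 × Bool)} (h : IsRed L) : IsRed (FreeGroup.invRev L) := by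
  unfold FreeGroup.invRev IsRed List.Chain'
  rw [List.isChain_reverse, List.isChain_map]
  refine h.imp ?_
  intro a b hab
  rintro ⟨h1, h2⟩
  exact hab ⟨h1.symm, by revert h2; cases a.2 <;> cases b.2 <;> simp⟩

/-- common prefix length -/
def cpl : List (Fin 2 × Bool) → List (Fin 2 × Bool) → ℕ
  | a :: s, b :: t => if a = b then cpl s t + 1 else 0
  | _, _ => 0

lemma cpl_nil_left (t : List (Fin 2 × Bool)) : cpl [] t = 0 := by cases t <;> rfl

lemma cpl_nil_right (s : List (Fin 2 × Bool)) : cpl s [] = 0 := by cases s <;> rfl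

lemma cpl_cons_eq {a : Fin 2 × Bool} (s t : List (Fin 2 × Bool)) :
    cpl (a :: s) (a :: t) = cpl s t + 1 := by simp [cpl]

lemma cpl_cons_ne {a b : Fin 2 × Bool} (h : a ≠ b) (s t : List (Fin 2 × Bool)) :
    cpl (a :: s) (b :: t) = 0 := by simp [cpl, h]

lemma cpl_le_left : ∀ s t : List (Fin 2 × Bool), cpl s t ≤ s.length
  | [], t => by rw [cpl_nil_left]; simp
  | a :: s, [] => by rw [cpl_nil_right]; simp
  | a :: s, b :: t => by
      by_cases h : a = b
      · subst h
        rw [cpl_cons_eq]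
        simpa using cpl_le_left s t
      · rw [cpl_cons_ne h]; simp

lemma cpl_le_right : ∀ s t : List (Fin 2 × Bool), cpl s t ≤ t.length
  | [], t => by rw [cpl_nil_left]; simp
  | a :: s, [] => by rw [cpl_nil_right]; simp
  | a :: s, b :: t => by
      by_cases h : a = b
      · subst h
        rw [cpl_cons_eq]
        simpa using cpl_le_right s t
      · rw [cpl_cons_ne h]; simp

lemma take_cpl_eq : ∀ s t : List (Fin 2 × Bool), s.take (cpl s t) = t.take (cpl s t)
  | [], t => by rw [cpl_nil_left]; simp
  | a :: s, [] => by rw [cpl_nil_right]; simp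
  | a :: s, b :: t => by
      by_cases h : a = b
      · subst h
        rw [cpl_cons_eq]
        simp [take_cpl_eq s t]
      · rw [cpl_cons_ne h]; simp

lemma invRev_getLast? {a : Fin 2 × Bool} (S : List (Fin 2 × Bool)) :
    (FreeGroup.invRev (a :: S)).getLast? = some (a.1, !a.2) := by
  unfold FreeGroup.invRev
  simp

/-- the key cancellation computation -/
lemma nocancel : ∀ S T : List (Fin 2 × Bool), IsRed S → IsRed T →
    FreeGroup.norm ((mk S)⁻¹ * mk T) + 2 * cpl S T = S.length + T.length
  | [], T => fun _ hT => by
      rw [cpl_nil_left, ← one_eq_mk, inv_one, one_mul, norm_mk_isRed hT]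
      simp
  | a :: S, [] => fun hS _ => by
      rw [cpl_nil_right, ← one_eq_mk, mul_one, norm_inv_eq, norm_mk_isRed hS]
      simp
  | a :: S, b :: T => fun hS hT => by
      by_cases h : a = b
      · subst h
        have key : (mk (a :: S))⁻¹ * mk (a :: T) = (mk S)⁻¹ * mk T := by
          have h1 : mk (a :: S) = mk [a] * mk S := by rw [mul_mk]; rfl
          have h2 : mk (a :: T) = mk [a] * mk T := by rw [mul_mk]; rfl
          rw [h1, h2, mul_inv_rev]
          group
        rw [key, cpl_cons_eq]
        have := nocancel S T hS.tail' hT.tail'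
        simp only [List.length_cons]
        omega
      · rw [cpl_cons_ne h]
        have key : (mk (a :: S))⁻¹ * mk (b :: T) = mk (FreeGroup.invRev (a :: S) ++ (b :: T)) := by
          rw [inv_mk, mul_mk]
        have hred : IsRed (FreeGroup.invRev (a :: S) ++ (b :: T)) := by
          apply List.isChain_append.2
          refine ⟨hS.invRev, hT, ?_⟩
          intro x hx y hy
          rw [invRev_getLast? S] at hx
          simp only [Option.mem_def, Option.some.injEq] at hx
          simp only [List.head?_cons, Option.mem_def, Option.some.injEq] at hy
          subst hx; subst hy
          rintro ⟨h1, h2⟩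
          apply h
          apply Prod.ext
          · exact h1
          · simp only at h2
            revert h2; cases a.2 <;> cases b.2 <;> simp
        rw [key, norm_mk_isRed hred]
        simp [FreeGroup.invRev]
        omega




lemma mk_single_true (i : Fin 2) : mk [(i, true)] = of i := rfl

lemma mk_single_false (i : Fin 2) : mk [(i, false)] = (of i)⁻¹ := by
  rw [show of i = mk [(i, true)] from rfl, inv_mk]
  simp [invRev]

/-- exponent-sum homomorphism (both generators ↦ 1) -/
def sgH : F2 →* Multiplicative ℤ := FreeGroup.lift fun _ => Multiplicative.ofAdd 1

def sg (w : F2) : ℤ := Multiplicative.toAdd (sgH w)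

@[simp] lemma sg_one : sg 1 = 0 := by simp [sg]
@[simp] lemma sg_mul (a b : F2) : sg (a * b) = sg a + sg b := by simp [sg]
@[simp] lemma sg_inv (a : F2) : sg a⁻¹ = -sg a := by simp [sg]
@[simp] lemma sg_of (i : Fin 2) : sg (of i) = 1 := by simp [sg, sgH]

/-- c-exponent homomorphism on the second factor (C ↦ 1, D ↦ 0) -/
def ecH : F2 →* Multiplicative ℤ :=
  FreeGroup.lift fun i => Multiplicative.ofAdd (if i = 0 then 1 else 0)

def ec (w : F2) : ℤ := Multiplicative.toAdd (ecH w)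

@[simp] lemma ec_one : ec 1 = 0 := by simp [ec]
@[simp] lemma ec_mul (a b : F2) : ec (a * b) = ec a + ec b := by simp [ec]
@[simp] lemma ec_inv (a : F2) : ec a⁻¹ = -ec a := by simp [ec]
@[simp] lemma ec_C : ec (of 0) = 1 := by simp [ec, ecH]
@[simp] lemma ec_D : ec (of 1) = 0 := by simp [ec, ecH]

/-- parity homomorphism -/
def p2H : F2 →* Multiplicative (ZMod 2) := FreeGroup.lift fun _ => Multiplicative.ofAdd 1

def p2 (w : F2) : ZMod 2 := Multiplicative.toAdd (p2H w)

@[simp] lemma p2_one : p2 1 = 0 := by simp [p2]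
@[simp] lemma p2_mul (a b : F2) : p2 (a * b) = p2 a + p2 b := by simp [p2]
@[simp] lemma p2_inv (a : F2) : p2 a⁻¹ = -p2 a := by simp [p2]
@[simp] lemma p2_of (i : Fin 2) : p2 (of i) = 1 := by simp [p2, p2H]

/-- signed letter count of a word -/
def sgn (L : List (Fin 2 × Bool)) : ℤ := (L.map fun a => if a.2 then (1 : ℤ) else -1).sum

@[simp] lemma sgn_nil : sgn [] = 0 := rfl

lemma sgn_cons (a : Fin 2 × Bool) (L : List (Fin 2 × Bool)) :
    sgn (a :: L) = (if a.2 then (1:ℤ) else -1) + sgn L := by simp [sgn]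

lemma sg_mk : ∀ L : List (Fin 2 × Bool), sg (mk L) = sgn L
  | [] => by rw [← one_eq_mk]; simp
  | a :: L => by
      have : mk (a :: L) = mk [a] * mk L := by rw [mul_mk]; rfl
      rw [this, sg_mul, sg_mk L, sgn_cons]
      rcases a with ⟨i, b⟩
      cases b
      · rw [mk_single_false]; simp
      · rw [mk_single_true]; simp

lemma p2_mk : ∀ L : List (Fin 2 × Bool), p2 (mk L) = (L.length : ZMod 2)
  | [] => by rw [← one_eq_mk]; simp
  | a :: L => by
      have : mk (a :: L) = mk [a] * mk L := by rw [mul_mk]; rfl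
      rw [this, p2_mul, p2_mk L]
      rcases a with ⟨i, b⟩
      cases b
      · rw [mk_single_false]
        simp only [p2_inv, p2_of, List.length_cons, Nat.cast_add, Nat.cast_one]
        rw [add_comm]
        norm_num
        decide
      · rw [mk_single_true]
        simp [add_comm]

lemma p2_eq_norm (w : F2) : p2 w = (FreeGroup.norm w : ZMod 2) := by
  conv_lhs => rw [← mk_toWord (x := w)]
  rw [p2_mk]
  rfl

lemma abs_sgn_le : ∀ L : List (Fin 2 × Bool), (sgn L).natAbs ≤ L.length
  | [] => by simp
  | a :: L => by
      rw [sgn_cons]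
      have := abs_sgn_le L
      rcases a with ⟨i, b⟩
      cases b <;> simp <;> omega

lemma sgn_take_add_drop (p : ℕ) (L : List (Fin 2 × Bool)) :
    sgn (L.take p) + sgn (L.drop p) = sgn L := by
  unfold sgn
  rw [List.map_take, List.map_drop, List.sum_take_add_sum_drop]

lemma sgn_replicate (m : ℕ) (i : Fin 2) (b : Bool) :
    sgn (List.replicate m (i, b)) = if b then (m : ℤ) else -(m : ℤ) := by
  induction m with
  | zero => simp
  | succ m ih => rw [List.replicate_succ, sgn_cons, ih]; cases b <;> simp <;> ring




/-! ### homomorphisms out of G -/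

def f1 : Fin 4 → F2 := fun i => if i = 0 then of 0 else if i = 1 then of 1 else 1

def f2 : Fin 4 → F2 :=
  fun i => if i = 0 then (of 0)⁻¹ else if i = 1 then (of 0)⁻¹ else if i = 2 then of 0 else of 1

lemma grels_cases {r : FreeGroup (Fin 4)} (h : r ∈ grels) :
    r = FreeGroup.of 0 * FreeGroup.of 2 * (FreeGroup.of 2 * FreeGroup.of 0)⁻¹ ∨
    r = FreeGroup.of 1 * FreeGroup.of 2 * (FreeGroup.of 2 * FreeGroup.of 1)⁻¹ ∨
    r = FreeGroup.of 0 * FreeGroup.of 2 * FreeGroup.of 3 *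
      (FreeGroup.of 3 * FreeGroup.of 0 * FreeGroup.of 2)⁻¹ ∨
    r = FreeGroup.of 1 * FreeGroup.of 2 * FreeGroup.of 3 *
      (FreeGroup.of 3 * FreeGroup.of 1 * FreeGroup.of 2)⁻¹ := by
  simpa [grels, Set.mem_insert_iff] using h

lemma hf1 : ∀ r ∈ grels, FreeGroup.lift f1 r = 1 := by
  intro r hr
  rcases grels_cases hr with h | h | h | h <;> subst h <;>
    simp [f1, _root_.map_mul, _root_.map_inv, FreeGroup.lift_apply_of] <;> group

lemma hf2 : ∀ r ∈ grels, FreeGroup.lift f2 r = 1 := by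
  intro r hr
  rcases grels_cases hr with h | h | h | h <;> subst h <;>
    simp [f2, _root_.map_mul, _root_.map_inv, FreeGroup.lift_apply_of] <;> group

def pi1 : G →* F2 := PresentedGroup.toGroup hf1
def pi2 : G →* F2 := PresentedGroup.toGroup hf2

@[simp] lemma pi1_ga : pi1 ga = of 0 := by
  show pi1 (PresentedGroup.of 0) = of 0
  rw [pi1, PresentedGroup.toGroup.of]; rfl
@[simp] lemma pi1_gb : pi1 gb = of 1 := by
  show pi1 (PresentedGroup.of 1) = of 1
  rw [pi1, PresentedGroup.toGroup.of]; rfl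
@[simp] lemma pi1_gc : pi1 gc = 1 := by
  show pi1 (PresentedGroup.of 2) = 1
  rw [pi1, PresentedGroup.toGroup.of]; rfl
@[simp] lemma pi1_gt : pi1 gt = 1 := by
  show pi1 (PresentedGroup.of 3) = 1
  rw [pi1, PresentedGroup.toGroup.of]; rfl
@[simp] lemma pi2_ga : pi2 ga = (of 0)⁻¹ := by
  show pi2 (PresentedGroup.of 0) = (of 0)⁻¹
  rw [pi2, PresentedGroup.toGroup.of]; rfl
@[simp] lemma pi2_gb : pi2 gb = (of 0)⁻¹ := by
  show pi2 (PresentedGroup.of 1) = (of 0)⁻¹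
  rw [pi2, PresentedGroup.toGroup.of]; rfl
@[simp] lemma pi2_gc : pi2 gc = of 0 := by
  show pi2 (PresentedGroup.of 2) = of 0
  rw [pi2, PresentedGroup.toGroup.of]; rfl
@[simp] lemma pi2_gt : pi2 gt = of 1 := by
  show pi2 (PresentedGroup.of 3) = of 1
  rw [pi2, PresentedGroup.toGroup.of]; rfl

/-! ### relations in G -/

lemma rel_one {r : FreeGroup (Fin 4)} (h : r ∈ grels) : PresentedGroup.mk grels r = 1 := by
  apply (QuotientGroup.eq_one_iff _).2
  exact Subgroup.subset_normalClosure h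

lemma comm_ac : Commute ga gc := by
  have h := rel_one (show FreeGroup.of 0 * FreeGroup.of 2 * (FreeGroup.of 2 * FreeGroup.of 0)⁻¹
      ∈ grels by simp [grels])
  simp only [_root_.map_mul, _root_.map_inv] at h
  have : ga * gc * (gc * ga)⁻¹ = 1 := h
  rw [mul_inv_eq_one] at this
  exact this

lemma comm_bc : Commute gb gc := by
  have h := rel_one (show FreeGroup.of 1 * FreeGroup.of 2 * (FreeGroup.of 2 * FreeGroup.of 1)⁻¹
      ∈ grels by simp [grels])
  simp only [_root_.map_mul, _root_.map_inv] at h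
  have : gb * gc * (gc * gb)⁻¹ = 1 := h
  rw [mul_inv_eq_one] at this
  exact this

lemma comm_act : Commute (ga * gc) gt := by
  have h := rel_one (show FreeGroup.of 0 * FreeGroup.of 2 * FreeGroup.of 3 *
      (FreeGroup.of 3 * FreeGroup.of 0 * FreeGroup.of 2)⁻¹ ∈ grels by simp [grels])
  simp only [_root_.map_mul, _root_.map_inv] at h
  have : ga * gc * gt * (gt * ga * gc)⁻¹ = 1 := h
  rw [mul_inv_eq_one] at this
  unfold Commute SemiconjBy
  rw [this]
  group

lemma comm_bct : Commute (gb * gc) gt := by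
  have h := rel_one (show FreeGroup.of 1 * FreeGroup.of 2 * FreeGroup.of 3 *
      (FreeGroup.of 3 * FreeGroup.of 1 * FreeGroup.of 2)⁻¹ ∈ grels by simp [grels])
  simp only [_root_.map_mul, _root_.map_inv] at h
  have : gb * gc * gt * (gt * gb * gc)⁻¹ = 1 := h
  rw [mul_inv_eq_one] at this
  unfold Commute SemiconjBy
  rw [this]
  group

/-! ### the witness elements -/

def uG (n : ℕ) : G := ga ^ n * gb⁻¹ * (ga ^ (n - 1))⁻¹

def vG (n : ℕ) : G := uG n * gt * ga

lemma uG_eq (n : ℕ) (hn : 1 ≤ n) :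
    uG n = (ga * gc) ^ n * (gb * gc)⁻¹ * ((ga * gc) ^ (n - 1))⁻¹ := by
  rw [comm_ac.mul_pow, comm_ac.mul_pow, mul_inv_rev, mul_inv_rev]
  have hb : ∀ m : ℕ, gc ^ m * gb⁻¹ = gb⁻¹ * gc ^ m :=
    fun m => ((comm_bc.inv_left.pow_right m).symm).eq
  have hsplit : gc ^ n = gc ^ (n - 1) * gc := by
    conv_lhs => rw [show n = (n - 1) + 1 by omega]
    rw [pow_succ]
  symm
  calc ga ^ n * gc ^ n * (gc⁻¹ * gb⁻¹) * ((gc ^ (n-1))⁻¹ * (ga ^ (n-1))⁻¹)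
      = ga ^ n * (gc ^ (n-1) * gb⁻¹ * (gc ^ (n-1))⁻¹) * (ga ^ (n-1))⁻¹ := by
        rw [hsplit]; group
    _ = ga ^ n * (gb⁻¹ * gc ^ (n-1) * (gc ^ (n-1))⁻¹) * (ga ^ (n-1))⁻¹ := by rw [hb]
    _ = uG n := by rw [uG]; group

lemma comm_u_gt (n : ℕ) (hn : 1 ≤ n) : Commute (uG n) gt := by
  rw [uG_eq n hn]
  exact ((comm_act.pow_left n).mul_left comm_bct.inv_left).mul_left ((comm_act.pow_left (n-1)).inv_left)

lemma vG_eq (n : ℕ) (hn : 2 ≤ n) :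
    vG n = gt * (ga ^ n * gb⁻¹ * (ga ^ (n - 2))⁻¹) := by
  rw [vG, (comm_u_gt n (by omega)).eq, uG]
  have : (ga ^ (n-1))⁻¹ * ga = (ga ^ (n-2))⁻¹ := by
    have : ga ^ (n-1) = ga ^ (n-2) * ga := by
      conv_lhs => rw [show n - 1 = (n - 2) + 1 by omega]
      rw [pow_succ]
    rw [this]; group
  rw [mul_assoc gt, mul_assoc (ga ^ n * gb⁻¹), this]

/-! ### the word lists -/

def UL (n : ℕ) : List (Fin 2 × Bool) :=
  List.replicate n ((0 : Fin 2), true) ++ ((1 : Fin 2), false) :: List.replicate (n-1) ((0 : Fin 2), false)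

def VL (n : ℕ) : List (Fin 2 × Bool) :=
  List.replicate n ((0 : Fin 2), true) ++ ((1 : Fin 2), false) :: List.replicate (n-2) ((0 : Fin 2), false)

lemma isRed_replicate (m : ℕ) (a : Fin 2 × Bool) : IsRed (List.replicate m a) := by
  induction m with
  | zero => exact List.isChain_nil
  | succ m ih =>
    cases m with
    | zero => exact List.isChain_singleton a
    | succ k =>
      rw [List.replicate_succ]
      refine List.isChain_cons_cons.2 ⟨?_, ih⟩
      rintro ⟨_, h⟩
      exact (Bool.eq_not_self a.2).1 h

lemma isRed_rep_cons_rep (m k : ℕ) (a b c : Fin 2 × Bool) (h1 : NC a b) (h2 : NC b c) :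
    IsRed (List.replicate m a ++ b :: List.replicate k c) := by
  apply List.isChain_append.2
  refine ⟨isRed_replicate m a, ?_, ?_⟩
  · refine List.isChain_cons.2 ⟨?_, isRed_replicate k c⟩
    intro y hy
    cases k with
    | zero => simp at hy
    | succ k =>
      rw [List.replicate_succ] at hy
      simp only [List.head?_cons, Option.mem_def, Option.some.injEq] at hy
      subst hy; exact h2
  · intro x hx y hy
    have hxa : x = a := by
      rcases List.mem_of_mem_getLast? hx with hm
      exact (List.eq_of_mem_replicate hm)
    simp only [List.head?_cons, Option.mem_def, Option.some.injEq] at hy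
    subst hxa; subst hy; exact h1

lemma NC_tf : NC ((0 : Fin 2), true) ((1 : Fin 2), false) := by rintro ⟨h, _⟩; simp at h
lemma NC_ff : NC ((1 : Fin 2), false) ((0 : Fin 2), false) := by rintro ⟨h, _⟩; simp at h

lemma isRed_UL (n : ℕ) : IsRed (UL n) := isRed_rep_cons_rep _ _ _ _ _ NC_tf NC_ff
lemma isRed_VL (n : ℕ) : IsRed (VL n) := isRed_rep_cons_rep _ _ _ _ _ NC_tf NC_ff

lemma UL_length (n : ℕ) (hn : 1 ≤ n) : (UL n).length = 2 * n := by
  simp [UL]; omega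

lemma VL_length (n : ℕ) (hn : 2 ≤ n) : (VL n).length = 2 * n - 1 := by
  simp [VL]; omega

lemma mk_replicate_true (m : ℕ) (i : Fin 2) :
    mk (List.replicate m (i, true)) = of i ^ m := by
  rw [← mk_toWord (x := of i ^ m), toWord_of_pow]

lemma mk_replicate_false (m : ℕ) (i : Fin 2) :
    mk (List.replicate m (i, false)) = (of i ^ m)⁻¹ := by
  rw [← mk_replicate_true, inv_mk]
  congr 1
  simp [FreeGroup.invRev, List.map_replicate, List.reverse_replicate]

lemma mk_UL (n : ℕ) : mk (UL n) = of 0 ^ n * (of 1)⁻¹ * (of 0 ^ (n-1))⁻¹ := by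
  have : UL n = List.replicate n ((0:Fin 2), true) ++ [((1:Fin 2), false)]
      ++ List.replicate (n-1) ((0:Fin 2), false) := by
    simp [UL]
  rw [this, ← mul_mk, ← mul_mk, mk_replicate_true, mk_replicate_false, mk_single_false]

lemma mk_VL (n : ℕ) : mk (VL n) = of 0 ^ n * (of 1)⁻¹ * (of 0 ^ (n-2))⁻¹ := by
  have : VL n = List.replicate n ((0:Fin 2), true) ++ [((1:Fin 2), false)]
      ++ List.replicate (n-2) ((0:Fin 2), false) := by
    simp [VL]
  rw [this, ← mul_mk, ← mul_mk, mk_replicate_true, mk_replicate_false, mk_single_false]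

lemma sgn_append (A B : List (Fin 2 × Bool)) : sgn (A ++ B) = sgn A + sgn B := by
  simp [sgn]

lemma sgn_UL (n : ℕ) (hn : 1 ≤ n) : sgn (UL n) = 0 := by
  rw [UL, sgn_append, sgn_cons, sgn_replicate, sgn_replicate]
  simp; omega

lemma sgn_VL (n : ℕ) (hn : 2 ≤ n) : sgn (VL n) = 1 := by
  rw [VL, sgn_append, sgn_cons, sgn_replicate, sgn_replicate]
  simp; omega

/-! ### values of the homomorphisms at u and v -/

lemma pi1_u (n : ℕ) : pi1 (uG n) = mk (UL n) := by
  rw [uG, mk_UL]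
  simp [map_mul, map_pow, map_inv]

lemma pi2_u (n : ℕ) (hn : 1 ≤ n) : pi2 (uG n) = 1 := by
  obtain ⟨m, rfl⟩ : ∃ m, n = m + 1 := ⟨n - 1, by omega⟩
  rw [uG]
  simp only [_root_.map_mul, map_pow, _root_.map_inv, pi2_ga, pi2_gb, Nat.add_sub_cancel]
  group

lemma UL_eq_VL_append (n : ℕ) (hn : 2 ≤ n) : UL n = VL n ++ [((0:Fin 2), false)] := by
  rw [UL, VL]
  have : n - 1 = (n - 2) + 1 := by omega
  rw [this, List.replicate_succ']
  simp

lemma pi1_v (n : ℕ) (hn : 2 ≤ n) : pi1 (vG n) = mk (VL n) := by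
  rw [vG]
  simp only [_root_.map_mul, pi1_gt, pi1_ga, mul_one, one_mul]
  rw [pi1_u, UL_eq_VL_append n hn, ← mul_mk]
  rw [mk_single_false]
  group

lemma pi2_v (n : ℕ) (hn : 1 ≤ n) : pi2 (vG n) = of 1 * (of 0)⁻¹ := by
  rw [vG]
  simp only [_root_.map_mul, pi2_gt, pi2_ga, pi2_u n hn, one_mul]

/-! ### generators -/

def Gen (s : G) : Prop := s ∈ SG ∨ s⁻¹ ∈ SG

lemma gen_cases {s : G} (h : Gen s) :
    s = ga ∨ s = gb ∨ s = gc ∨ s = gt ∨ s = ga⁻¹ ∨ s = gb⁻¹ ∨ s = gc⁻¹ ∨ s = gt⁻¹ := by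
  rcases h with h | h
  · simp only [SG, Set.mem_insert_iff, Set.mem_singleton_iff] at h
    tauto
  · simp only [SG, Set.mem_insert_iff, Set.mem_singleton_iff] at h
    rcases h with h | h | h | h <;> rw [← inv_inv s, h] <;> tauto

lemma J_letter {s : G} (h : Gen s) :
    FreeGroup.norm (pi1 s) + (sg (pi1 s) + ec (pi2 s)).natAbs ≤ 1 := by
  rcases gen_cases h with h | h | h | h | h | h | h | h <;> subst h <;>
    simp [map_inv, FreeGroup.norm_inv_eq]

lemma p2_letter {s : G} (h : Gen s) : p2 (pi2 s) = 1 := by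
  rcases gen_cases h with h | h | h | h | h | h | h | h <;> subst h <;>
    simp [map_inv] <;> decide

lemma J_prod_le (L : List G) (h : ∀ s ∈ L, Gen s) :
    FreeGroup.norm (pi1 L.prod) + (sg (pi1 L.prod) + ec (pi2 L.prod)).natAbs ≤ L.length := by
  induction L with
  | nil => simp
  | cons s L ih =>
    have hs := J_letter (h s (by simp))
    have hL := ih (fun x hx => h x (by simp [hx]))
    rw [List.prod_cons]
    have h1 : FreeGroup.norm (pi1 (s * L.prod)) ≤ FreeGroup.norm (pi1 s)
        + FreeGroup.norm (pi1 L.prod) := by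
      rw [_root_.map_mul]; exact FreeGroup.norm_mul_le _ _
    have h2 : (sg (pi1 (s * L.prod)) + ec (pi2 (s * L.prod))).natAbs ≤
        (sg (pi1 s) + ec (pi2 s)).natAbs + (sg (pi1 L.prod) + ec (pi2 L.prod)).natAbs := by
      simp only [_root_.map_mul, sg_mul, ec_mul]
      have := Int.natAbs_add_le (sg (pi1 s) + ec (pi2 s)) (sg (pi1 L.prod) + ec (pi2 L.prod))
      have heq : sg (pi1 s) + sg (pi1 L.prod) + (ec (pi2 s) + ec (pi2 L.prod)) =
          (sg (pi1 s) + ec (pi2 s)) + (sg (pi1 L.prod) + ec (pi2 L.prod)) := by ring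
      rw [heq]
      exact this
    simp only [List.length_cons]
    omega

lemma p2_prod (L : List G) (h : ∀ s ∈ L, Gen s) :
    p2 (pi2 L.prod) = (L.length : ZMod 2) := by
  induction L with
  | nil => simp
  | cons s L ih =>
    rw [List.prod_cons, _root_.map_mul, p2_mul, p2_letter (h s (by simp)),
      ih (fun x hx => h x (by simp [hx]))]
    simp [add_comm]

/-! ### word length bounds -/

lemma wordLength_le (g : G) (L : List G) (h : ∀ s ∈ L, Gen s) (hp : L.prod = g) :
    wordLength SG g ≤ L.length :=
  Nat.sInf_le ⟨L, rfl, h, hp⟩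

lemma wordLength_lower (g : G) (L₀ : List G) (h₀ : ∀ s ∈ L₀, Gen s) (hp : L₀.prod = g) :
    FreeGroup.norm (pi1 g) + (sg (pi1 g) + ec (pi2 g)).natAbs ≤ wordLength SG g ∧
      p2 (pi2 g) = (wordLength SG g : ZMod 2) := by
  have hne : {n | ∃ l : List G, l.length = n ∧ (∀ x ∈ l, x ∈ SG ∨ x⁻¹ ∈ SG) ∧ l.prod = g}.Nonempty :=
    ⟨L₀.length, L₀, rfl, h₀, hp⟩
  have hmem := Nat.sInf_mem hne
  obtain ⟨L, hL, hgen, hprod⟩ := hmem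
  rw [wordLength, ← hL, ← hprod]
  exact ⟨J_prod_le L hgen, p2_prod L hgen⟩

/-! ### lists for u and v -/

def uList (n : ℕ) : List G := List.replicate n ga ++ gb⁻¹ :: List.replicate (n-1) ga⁻¹

def vList (n : ℕ) : List G := gt :: (List.replicate n ga ++ gb⁻¹ :: List.replicate (n-2) ga⁻¹)

lemma gen_uList (n : ℕ) : ∀ s ∈ uList n, Gen s := by
  intro s hs
  simp only [uList, List.mem_append, List.mem_cons, List.mem_replicate] at hs
  unfold Gen SG
  rcases hs with ⟨_, rfl⟩ | rfl | ⟨_, rfl⟩ <;> simp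

lemma gen_vList (n : ℕ) : ∀ s ∈ vList n, Gen s := by
  intro s hs
  simp only [vList, List.mem_cons, List.mem_append, List.mem_replicate] at hs
  unfold Gen SG
  rcases hs with rfl | ⟨_, rfl⟩ | rfl | ⟨_, rfl⟩ <;> simp

lemma prod_uList (n : ℕ) : (uList n).prod = uG n := by
  rw [uList, List.prod_append, List.prod_cons, List.prod_replicate, List.prod_replicate,
    inv_pow, uG, mul_assoc]

lemma prod_vList (n : ℕ) (hn : 2 ≤ n) : (vList n).prod = vG n := by
  rw [vList, List.prod_cons, List.prod_append, List.prod_cons, List.prod_replicate,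
    List.prod_replicate, inv_pow, vG_eq n hn, mul_assoc]

lemma uList_length (n : ℕ) (hn : 1 ≤ n) : (uList n).length = 2 * n := by
  simp [uList]; omega

lemma vList_length (n : ℕ) (hn : 2 ≤ n) : (vList n).length = 2 * n := by
  simp [vList]; omega

lemma wl_u (n : ℕ) (hn : 2 ≤ n) : wordLength SG (uG n) = 2 * n := by
  have hle : wordLength SG (uG n) ≤ 2 * n := by
    rw [← uList_length n (by omega)]
    exact wordLength_le _ _ (gen_uList n) (prod_uList n)
  have hlow := (wordLength_lower (uG n) (uList n) (gen_uList n) (prod_uList n)).1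
  rw [pi1_u, pi2_u n (by omega), norm_mk_isRed (isRed_UL n), UL_length n (by omega), sg_mk,
    sgn_UL n (by omega)] at hlow
  simp at hlow
  omega

lemma wl_v (n : ℕ) (hn : 2 ≤ n) : wordLength SG (vG n) = 2 * n := by
  have hle : wordLength SG (vG n) ≤ 2 * n := by
    rw [← vList_length n hn]
    exact wordLength_le _ _ (gen_vList n) (prod_vList n hn)
  have hlow := wordLength_lower (vG n) (vList n) (gen_vList n) (prod_vList n hn)
  have h1 := hlow.1
  have h2 := hlow.2
  rw [pi1_v n hn, pi2_v n (by omega), norm_mk_isRed (isRed_VL n), VL_length n hn, sg_mk,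
    sgn_VL n hn] at h1
  have hec : ec (of 1 * (of 0)⁻¹) = -1 := by simp
  have hsg : (1 + ec (of 1 * (of 0)⁻¹)).natAbs = 0 := by rw [hec]; rfl
  rw [hsg] at h1
  -- parity
  rw [pi2_v n (by omega)] at h2
  have hp : p2 (of 1 * (of 0)⁻¹) = 0 := by simp; decide
  rw [hp] at h2
  have heven : (2 : ℕ) ∣ wordLength SG (vG n) := by
    rwa [eq_comm, ZMod.natCast_eq_zero_iff] at h2
  omega

lemma wl_uv (n : ℕ) : wordLength SG ((uG n)⁻¹ * vG n) ≤ 2 := by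
  have h : (uG n)⁻¹ * vG n = gt * ga := by rw [vG]; group
  have := wordLength_le ((uG n)⁻¹ * vG n) [gt, ga] ?_ ?_
  · simpa using this
  · intro s hs
    simp only [List.mem_cons, List.not_mem_nil, or_false] at hs
    unfold Gen SG
    rcases hs with rfl | rfl <;> simp
  · simp [h]


/-! ### reducedness of toWord -/

lemma isRed_of_no_pair :
    ∀ L : List (Fin 2 × Bool),
      (∀ (L₂ : List (Fin 2 × Bool)) (x : Fin 2) (b : Bool) (L₃ : List (Fin 2 × Bool)),
        L ≠ L₂ ++ (x, b) :: (x, !b) :: L₃) → IsRed L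
  | [] => fun _ => List.isChain_nil
  | [a] => fun _ => List.isChain_singleton a
  | a :: b :: T => fun h => by
      refine List.isChain_cons_cons.2 ⟨?_, ?_⟩
      · rintro ⟨h1, h2⟩
        refine h [] a.1 a.2 T ?_
        have hb : b = (a.1, !a.2) := by
          rcases a with ⟨x, ba⟩
          rcases b with ⟨y, bb⟩
          simp only at h1 h2
          subst h1
          cases ba <;> cases bb <;> simp_all
        rw [hb]
        simp
      · exact isRed_of_no_pair (b :: T) (fun L₂ x bb L₃ hh => h (a :: L₂) x bb L₃ (by rw [hh]; rfl))

lemma isRed_toWord (z : F2) : IsRed (toWord z) := by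
  apply isRed_of_no_pair
  intro L₂ x b L₃ h
  exact FreeGroup.reduce.not (L₁ := toWord z) (by rw [reduce_toWord, h])

/-! ### multiplying by a single letter -/

/-- "starts with D" -/
def SD (z : F2) : Prop := z.toWord.head? = some ((1 : Fin 2), true)

lemma SD_step {z : F2} {a : Fin 2 × Bool} (h0 : ¬ SD z) (h1 : SD (z * mk [a])) :
    z = 1 ∧ a = ((1 : Fin 2), true) := by
  set Z := toWord z with hZ
  have hzr : IsRed Z := isRed_toWord z
  have hmul : z * mk [a] = mk (Z ++ [a]) := by
    conv_lhs => rw [← mk_toWord (x := z)]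
    rw [mul_mk]
  by_cases hlast : Z.getLast? = some (a.1, !a.2)
  · -- cancellation: contradiction
    exfalso
    have hsplit : Z.dropLast ++ [(a.1, !a.2)] = Z :=
      List.dropLast_append_getLast? _ (by rw [hlast]; rfl)
    have hmk : mk (Z ++ [a]) = mk Z.dropLast := by
      have hsplit2 : Z ++ [a] = Z.dropLast ++ [(a.1, !a.2)] ++ [a] := by
        rw [hsplit]
      rw [hsplit2, ← mul_mk, ← mul_mk, mul_assoc]
      have hone : mk [(a.1, !a.2)] * mk [a] = 1 := by
        rcases a with ⟨x, b⟩
        cases b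
        · simp only [Bool.not_false]
          rw [mk_single_true, mk_single_false]
          group
        · simp only [Bool.not_true]
          rw [mk_single_true, mk_single_false]
          group
      rw [hone, mul_one]
    have hred : IsRed Z.dropLast := hzr.prefix (List.dropLast_prefix Z)
    have htw : (z * mk [a]).toWord = Z.dropLast := by
      rw [hmul, hmk, toWord_mk_isRed hred]
    rw [SD, htw] at h1
    have hne : Z.dropLast ≠ [] := by
      intro he
      rw [he] at h1
      simp at h1
    apply h0
    rw [SD, ← hZ, ← hsplit, List.head?_append_of_ne_nil _ hne]
    exact h1
  · -- no cancellation
    have hred : IsRed (Z ++ [a]) := by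
      apply List.isChain_append.2
      refine ⟨hzr, List.isChain_singleton a, ?_⟩
      intro x hx y hy
      simp only [List.head?_cons, Option.mem_def, Option.some.injEq] at hy
      subst hy
      rintro ⟨hh1, hh2⟩
      apply hlast
      rw [Option.mem_def] at hx
      rw [hx]
      exact congrArg some (Prod.ext hh1 hh2)
    have htw : (z * mk [a]).toWord = Z ++ [a] := by rw [hmul, toWord_mk_isRed hred]
    rw [SD, htw] at h1
    cases hZnil : Z with
    | nil =>
      constructor
      · rw [← mk_toWord (x := z), ← hZ, hZnil, ← one_eq_mk]
      · rw [hZnil] at h1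
        simpa using h1
    | cons c T =>
      exfalso
      apply h0
      rw [hZnil] at h1
      simp only [List.cons_append, List.head?_cons, Option.some.injEq] at h1
      rw [SD, ← hZ, hZnil]
      simp [h1]

/-! ### sgn of prefixes of UL/VL -/

lemma take_small (k n p : ℕ) (hp : p ≤ n) :
    ((List.replicate n ((0:Fin 2), true) ++ ((1:Fin 2), false) :: List.replicate k ((0:Fin 2), false)).take p)
      = List.replicate p ((0:Fin 2), true) := by
  rw [List.take_append_of_le_length (by simpa using hp), List.take_replicate, min_eq_left hp]

lemma sgn_take_small (k n p : ℕ) (hp : p ≤ n) :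
    sgn ((List.replicate n ((0:Fin 2), true) ++ ((1:Fin 2), false) :: List.replicate k ((0:Fin 2), false)).take p)
      = (p : ℤ) := by
  rw [take_small k n p hp, sgn_replicate]
  simp

lemma sgn_take_big (k n p : ℕ) (hp1 : n < p) (hp2 : p ≤ n + 1 + k) :
    sgn ((List.replicate n ((0:Fin 2), true) ++ ((1:Fin 2), false) :: List.replicate k ((0:Fin 2), false)).take p)
      = (n : ℤ) - 1 - ((p : ℤ) - n - 1) := by
  obtain ⟨j, rfl⟩ : ∃ j, p = n + (j + 1) := ⟨p - n - 1, by omega⟩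
  rw [List.take_append]
  have h1 : (List.replicate n ((0:Fin 2), true)).take (n + (j+1)) = List.replicate n ((0:Fin 2), true) := by
    apply List.take_of_length_le
    simp
  rw [h1]
  have h2 : n + (j + 1) - (List.replicate n ((0:Fin 2), true)).length = j + 1 := by
    simp
  rw [h2, List.take_succ_cons, List.take_replicate, min_eq_left (by omega : j ≤ k)]
  rw [sgn_append, sgn_cons, sgn_replicate, sgn_replicate]
  simp
  push_cast
  ring

/-! ### the KEY geometric lemmas -/

lemma KEY (n : ℕ) (hn : 2 ≤ n) (w : F2)
    (hball : FreeGroup.norm w + (sg w).natAbs ≤ 2 * n - 1) :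
    2 * n ≤ FreeGroup.norm ((mk (UL n))⁻¹ * w) + (sg w).natAbs ∧
    2 * n - 1 ≤ FreeGroup.norm ((mk (VL n))⁻¹ * w) + (sg w).natAbs := by
  set Z := toWord w with hZdef
  have hZred : IsRed Z := isRed_toWord w
  have hw : w = mk Z := (mk_toWord (x := w)).symm
  have hnormw : FreeGroup.norm w = Z.length := by rw [hw, norm_mk_isRed hZred]
  have hsgw : sg w = sgn Z := by rw [hw, sg_mk]
  constructor
  · -- UL part
    set p := cpl (UL n) Z with hpdef
    have hnc := nocancel (UL n) Z (isRed_UL n) hZred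
    rw [← hw] at hnc
    rw [UL_length n (by omega)] at hnc
    have hple : p ≤ 2 * n := by
      have := cpl_le_left (UL n) Z
      rw [UL_length n (by omega)] at this
      exact this
    have hpZ : p ≤ Z.length := cpl_le_right (UL n) Z
    have htake : (UL n).take p = Z.take p := take_cpl_eq (UL n) Z
    have hdecomp : sgn (Z.take p) + sgn (Z.drop p) = sgn Z := sgn_take_add_drop p Z
    have htabs : (sgn (Z.drop p)).natAbs ≤ Z.length - p := by
      have := abs_sgn_le (Z.drop p)
      rwa [List.length_drop] at this
    by_cases hcase : p ≤ n
    · have hsgtake : sgn (Z.take p) = (p : ℤ) := by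
        rw [← htake, UL]
        exact sgn_take_small _ _ _ hcase
      rw [hsgw]
      omega
    · exfalso
      have hsgtake : sgn (Z.take p) = (n : ℤ) - 1 - ((p : ℤ) - n - 1) := by
        rw [← htake, UL]
        exact sgn_take_big _ _ _ (by omega) (by omega)
      rw [hnormw, hsgw] at hball
      omega
  · -- VL part
    set q := cpl (VL n) Z with hqdef
    have hnc := nocancel (VL n) Z (isRed_VL n) hZred
    rw [← hw] at hnc
    rw [VL_length n hn] at hnc
    have hqle : q ≤ 2 * n - 1 := by
      have := cpl_le_left (VL n) Z
      rw [VL_length n hn] at this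
      exact this
    have hqZ : q ≤ Z.length := cpl_le_right (VL n) Z
    have htake : (VL n).take q = Z.take q := take_cpl_eq (VL n) Z
    have hdecomp : sgn (Z.take q) + sgn (Z.drop q) = sgn Z := sgn_take_add_drop q Z
    have htabs : (sgn (Z.drop q)).natAbs ≤ Z.length - q := by
      have := abs_sgn_le (Z.drop q)
      rwa [List.length_drop] at this
    by_cases hcase : q ≤ n
    · have hsgtake : sgn (Z.take q) = (q : ℤ) := by
        rw [← htake, VL]
        exact sgn_take_small _ _ _ hcase
      rw [hsgw]
      omega
    · exfalso
      have hsgtake : sgn (Z.take q) = (n : ℤ) - 1 - ((q : ℤ) - n - 1) := by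
        rw [← htake, VL]
        exact sgn_take_big _ _ _ (by omega) (by omega)
      rw [hnormw, hsgw] at hball
      omega

lemma exists_cross (P : ℕ → Prop) (L : ℕ) (h0 : ¬ P 0) (hL : P L) :
    ∃ k, k < L ∧ ¬ P k ∧ P (k + 1) := by
  classical
  have hex : ∃ i, P i := ⟨L, hL⟩
  have hk₀ : P (Nat.find hex) := Nat.find_spec hex
  have hk₀L : Nat.find hex ≤ L := Nat.find_min' hex hL
  have hk₀0 : Nat.find hex ≠ 0 := fun h => h0 (h ▸ hk₀)
  refine ⟨Nat.find hex - 1, by omega, ?_, ?_⟩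
  · exact Nat.find_min hex (by omega)
  · have h1 : Nat.find hex - 1 + 1 = Nat.find hex := by omega
    rw [h1]
    exact hk₀

lemma path_long (n : ℕ) (hn : 2 ≤ n) (steps : List G)
    (hgen : ∀ s ∈ steps, s ∈ SG ∨ s⁻¹ ∈ SG)
    (hprod : uG n * steps.prod = vG n)
    (hball : ∀ l, l <+: steps → wordLength SG (uG n * l.prod) ≤ 2 * n) :
    4 * n ≤ steps.length := by
  have hζ0 : ¬ SD (pi2 (uG n * (steps.take 0).prod)) := by
    simp only [List.take_zero, List.prod_nil, mul_one]
    rw [SD, pi2_u n (by omega)]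
    simp
  have hpi2v : pi2 (vG n) = mk [((1:Fin 2), true), ((0:Fin 2), false)] := by
    rw [pi2_v n (by omega)]
    rw [show of (1 : Fin 2) = mk [((1:Fin 2), true)] from rfl, ← mk_single_false, mul_mk]
    rfl
  have hredv : IsRed [((1:Fin 2), true), ((0:Fin 2), false)] := by
    refine List.isChain_cons_cons.2 ⟨?_, List.isChain_singleton _⟩
    rintro ⟨h1, -⟩
    simp at h1
  have hζL : SD (pi2 (uG n * (steps.take steps.length).prod)) := by
    rw [List.take_length, hprod, SD, hpi2v, toWord_mk_isRed hredv]
    rfl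
  obtain ⟨k, hkL, hk0, hk1⟩ :=
    exists_cross (fun i => SD (pi2 (uG n * (steps.take i).prod))) steps.length hζ0 hζL
  have hstep : (steps.take (k+1)).prod = (steps.take k).prod * steps[k]'hkL :=
    List.prod_take_succ steps k hkL
  have hsmem : steps[k]'hkL ∈ steps := List.getElem_mem hkL
  have hsg := hgen _ hsmem
  have hζstep : pi2 (uG n * (steps.take (k+1)).prod)
      = pi2 (uG n * (steps.take k).prod) * pi2 (steps[k]'hkL) := by
    rw [hstep, ← mul_assoc, _root_.map_mul]
  -- identify the crossing step
  have hkey : pi2 (uG n * (steps.take k).prod) = 1 ∧ pi1 (steps[k]'hkL) = 1 ∧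
      pi2 (steps[k]'hkL) = of 1 := by
    rcases gen_cases hsg with h | h | h | h | h | h | h | h <;> rw [h] at hζstep ⊢
    · rw [pi2_ga, ← mk_single_false] at hζstep
      rw [hζstep] at hk1
      exact absurd (SD_step hk0 hk1).2 (by decide)
    · rw [pi2_gb, ← mk_single_false] at hζstep
      rw [hζstep] at hk1
      exact absurd (SD_step hk0 hk1).2 (by decide)
    · rw [pi2_gc, ← mk_single_true] at hζstep
      rw [hζstep] at hk1
      exact absurd (SD_step hk0 hk1).2 (by decide)
    · rw [pi2_gt, ← mk_single_true] at hζstep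
      rw [hζstep] at hk1
      exact ⟨(SD_step hk0 hk1).1, pi1_gt, pi2_gt⟩
    · rw [_root_.map_inv, pi2_ga, inv_inv, ← mk_single_true] at hζstep
      rw [hζstep] at hk1
      exact absurd (SD_step hk0 hk1).2 (by decide)
    · rw [_root_.map_inv, pi2_gb, inv_inv, ← mk_single_true] at hζstep
      rw [hζstep] at hk1
      exact absurd (SD_step hk0 hk1).2 (by decide)
    · rw [_root_.map_inv, pi2_gc, ← mk_single_false] at hζstep
      rw [hζstep] at hk1
      exact absurd (SD_step hk0 hk1).2 (by decide)
    · rw [_root_.map_inv, pi2_gt] at hζstep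
      have hof : (of (1:Fin 2))⁻¹ = mk [((1:Fin 2), false)] := by rw [mk_single_false]
      rw [hof] at hζstep
      rw [hζstep] at hk1
      exact absurd (SD_step hk0 hk1).2 (by decide)
  obtain ⟨hζk, hπ1s, hπ2s⟩ := hkey
  set ω : F2 := pi1 (uG n * (steps.take k).prod) with hω
  have hπ1g' : pi1 (uG n * (steps.take (k+1)).prod) = ω := by
    rw [hstep, ← mul_assoc, _root_.map_mul, hπ1s, mul_one, hω]
  have hπ2g' : pi2 (uG n * (steps.take (k+1)).prod) = of 1 := by
    rw [hζstep, hζk, hπ2s, one_mul]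
  -- ball constraint at the crossing
  have hbmem : wordLength SG (uG n * (steps.take (k+1)).prod) ≤ 2 * n :=
    hball (steps.take (k+1)) (List.take_prefix _ _)
  have hwit : (uList n ++ steps.take (k+1)).prod = uG n * (steps.take (k+1)).prod := by
    rw [List.prod_append, prod_uList]
  have hwitgen : ∀ s ∈ uList n ++ steps.take (k+1), s ∈ SG ∨ s⁻¹ ∈ SG := by
    intro s hs
    rcases List.mem_append.1 hs with hs | hs
    · exact gen_uList n s hs
    · exact hgen s (List.take_subset _ _ hs)
  obtain ⟨hJg', hPg'⟩ :=
    wordLength_lower (uG n * (steps.take (k+1)).prod) _ hwitgen hwit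
  rw [hπ1g'] at hJg'
  rw [hπ2g'] at hJg' hPg'
  have hec1 : ec (of (1:Fin 2)) = 0 := ec_D
  rw [hec1, add_zero] at hJg'
  have hp21 : p2 (of (1:Fin 2)) = 1 := p2_of 1
  rw [hp21] at hPg'
  have hodd : ¬ (2 ∣ wordLength SG (uG n * (steps.take (k+1)).prod)) := by
    intro hd
    rw [(ZMod.natCast_eq_zero_iff _ 2).2 hd] at hPg'
    exact absurd hPg' (by decide)
  have hball' : FreeGroup.norm ω + (sg ω).natAbs ≤ 2 * n - 1 := by omega
  obtain ⟨hK1, hK2⟩ := KEY n hn ω hball'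
  -- count the first part of the path
  have hJtake := J_prod_le (steps.take k) (fun s hs => hgen s (List.take_subset _ _ hs))
  have hπ1P : pi1 ((steps.take k).prod) = (mk (UL n))⁻¹ * ω := by
    have : ω = mk (UL n) * pi1 ((steps.take k).prod) := by
      rw [hω, _root_.map_mul, pi1_u]
    rw [this]
    group
  have hπ2P : pi2 ((steps.take k).prod) = 1 := by
    have : (1 : F2) = pi2 (uG n) * pi2 ((steps.take k).prod) := by
      rw [← _root_.map_mul, hζk]
    rw [pi2_u n (by omega), one_mul] at this
    exact this.symm
  rw [hπ1P, hπ2P] at hJtake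
  have hsgP : sg ((mk (UL n))⁻¹ * ω) = sg ω := by
    rw [sg_mul, sg_inv, sg_mk, sgn_UL n (by omega)]
    ring
  rw [hsgP, ec_one, add_zero] at hJtake
  have hlen_take : (steps.take k).length = k := by
    rw [List.length_take]
    omega
  rw [hlen_take] at hJtake
  have hcount1 : 2 * n ≤ k := le_trans hK1 hJtake
  -- count the last part of the path
  have hdrop_prod : (steps.drop (k+1)).prod
      = (uG n * (steps.take (k+1)).prod)⁻¹ * vG n := by
    have hsplit := List.prod_take_mul_prod_drop steps (k+1)
    have : uG n * ((steps.take (k+1)).prod * (steps.drop (k+1)).prod) = vG n := by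
      rw [hsplit, hprod]
    rw [← mul_assoc] at this
    rw [← this]
    group
  have hJdrop := J_prod_le (steps.drop (k+1)) (fun s hs => hgen s (List.drop_subset _ _ hs))
  rw [hdrop_prod] at hJdrop
  have hπ1D : pi1 ((uG n * (steps.take (k+1)).prod)⁻¹ * vG n) = ω⁻¹ * mk (VL n) := by
    rw [_root_.map_mul, _root_.map_inv, hπ1g', pi1_v n hn]
  have hπ2D : pi2 ((uG n * (steps.take (k+1)).prod)⁻¹ * vG n) = (of 0)⁻¹ := by
    rw [_root_.map_mul, _root_.map_inv, hπ2g', pi2_v n (by omega)]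
    group
  rw [hπ1D, hπ2D] at hJdrop
  have hnD : FreeGroup.norm (ω⁻¹ * mk (VL n)) = FreeGroup.norm ((mk (VL n))⁻¹ * ω) := by
    rw [← FreeGroup.norm_inv_eq (x := ω⁻¹ * mk (VL n))]
    congr 1
    group
  have hsgD : (sg (ω⁻¹ * mk (VL n)) + ec ((of (0:Fin 2))⁻¹)).natAbs = (sg ω).natAbs := by
    rw [sg_mul, sg_inv, sg_mk, sgn_VL n hn, ec_inv, ec_C]
    have : -sg ω + 1 + -1 = -(sg ω) := by ring
    rw [this, Int.natAbs_neg]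
  rw [hnD, hsgD, List.length_drop] at hJdrop
  have hcount2 : 2 * n - 1 ≤ steps.length - (k+1) := le_trans hK2 hJdrop
  omega

end NotMAC

/-- The pair (G, {x,y,c,d}) with presentation
⟨x,y,c,d | xc=cx, yc=cy, xcd=dxc, ycd=dyc⟩ is not minimally almost convex:
no almost convexity condition AC_{f,r₀} with f(r) ≤ 2r - 1 holds. -/
theorem stmt11 :
    ¬ ∃ (f : ℕ → ℕ) (r₀ : ℕ), (∀ r : ℕ, 1 ≤ r → (f r : ℤ) ≤ 2 * r - 1) ∧ AlmostConvex SG f r₀ := by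
  rintro ⟨f, r₀, hf, hAC⟩
  set n := r₀ + 2 with hndef
  have hn : 2 ≤ n := by omega
  obtain ⟨steps, ⟨hgen, hprod, hball⟩, hlen⟩ :=
    hAC (2*n) (by omega) (NotMAC.uG n) (NotMAC.vG n) (NotMAC.wl_u n hn) (NotMAC.wl_v n hn)
      (NotMAC.wl_uv n)
  have hball' : ∀ l, l <+: steps → wordLength SG (NotMAC.uG n * l.prod) ≤ 2*n :=
    fun l hl => hball l hl
  have hlong := NotMAC.path_long n hn steps hgen hprod hball'
  have hfr := hf (2*n) (by omega)
  have hlen' : (steps.length : ℤ) ≤ (f (2*n) : ℤ) := by exact_mod_cast hlen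
  have hcast : (steps.length : ℤ) ≤ 2*(2*(n:ℤ)) - 1 := by
    push_cast at hfr
    linarith
  have : (4 * n : ℤ) ≤ (steps.length : ℤ) := by exact_mod_cast hlong
  omega
end

section
/- Let F₂ be the free group on a,b and k ≥ 1. If r₁, r₂ are reduced words in F₂ with |r₁| ≤ k and |r₂| ≤ k, then the word length of r₁⁻¹ · aᵏ · b⁻⁴ᵏ · aᵏ · r₂ in F₂ is at least 4k + (k - x₁ + |y₁|) + (k + x₂ + |y₂|), where xᵢ and yᵢ are the exponent sums of a and b respectively in rᵢ. In particular it is at least 6k - x₁ + x₂ + |y₁| + |y₂|. -/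
/-- The a-exponent sum homomorphism F₂ → ℤ (a ↦ 1, b ↦ 0). -/
def expA : FreeGroup Bool →* Multiplicative ℤ :=
  FreeGroup.lift fun i => if i then Multiplicative.ofAdd 1 else 1

/-- The b-exponent sum homomorphism F₂ → ℤ (a ↦ 0, b ↦ 1). -/
def expB : FreeGroup Bool →* Multiplicative ℤ :=
  FreeGroup.lift fun i => if i then 1 else Multiplicative.ofAdd 1

open Finsupp Multiplicative

noncomputable def shiftE (s : ℤ) : (ℤ →₀ ℤ) ≃+ (ℤ →₀ ℤ) := Finsupp.domCongr (Equiv.addRight s)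

lemma shiftE_apply (s : ℤ) (q : ℤ →₀ ℤ) (d : ℤ) : shiftE s q d = q (d - s) := rfl

lemma shiftE_single (s m v : ℤ) : shiftE s (Finsupp.single m v) = Finsupp.single (m + s) v := by
  ext d
  rw [shiftE_apply, Finsupp.single_apply, Finsupp.single_apply]
  congr 1
  simp [eq_sub_iff_add_eq]

noncomputable def shiftHom : Multiplicative ℤ →* MulAut (Multiplicative (ℤ →₀ ℤ)) where
  toFun s := AddEquiv.toMultiplicative (shiftE s.toAdd)
  map_one' := by
    refine MulEquiv.ext fun q => ?_
    refine Finsupp.ext fun d => ?_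
    show toAdd q (d - (0:ℤ)) = toAdd q d
    rw [sub_zero]
  map_mul' s t := by
    refine MulEquiv.ext fun q => ?_
    refine Finsupp.ext fun d => ?_
    show toAdd q (d - (toAdd s + toAdd t)) = toAdd q (d - toAdd s - toAdd t)
    rw [sub_sub]

noncomputable abbrev W := SemidirectProduct (Multiplicative (ℤ →₀ ℤ)) (Multiplicative ℤ) shiftHom

noncomputable def Φ : FreeGroup Bool →* W :=
  FreeGroup.lift fun i => if i then SemidirectProduct.inr (Multiplicative.ofAdd 1)
    else SemidirectProduct.inl (Multiplicative.ofAdd (Finsupp.single 0 1))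

lemma Phi_right (g : FreeGroup Bool) : (Φ g).right = expA g := by
  have h : (SemidirectProduct.rightHom.comp Φ) = expA := by
    apply FreeGroup.ext_hom
    intro a
    cases a <;> simp [Φ, expA]
  have := congrFun (congrArg DFunLike.coe h) g
  simpa using this

noncomputable def poly (g : FreeGroup Bool) : ℤ →₀ ℤ := Multiplicative.toAdd (Φ g).left

noncomputable def eA (g : FreeGroup Bool) : ℤ := Multiplicative.toAdd (expA g)

lemma poly_mul (g h : FreeGroup Bool) :
    poly (g * h) = poly g + shiftE (eA g) (poly h) := by
  unfold poly
  rw [map_mul, SemidirectProduct.mul_left, toAdd_mul, Phi_right]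
  rfl

lemma poly_one : poly 1 = 0 := by simp [poly]

lemma eA_mul (g h : FreeGroup Bool) : eA (g * h) = eA g + eA h := by
  simp [eA, map_mul]

lemma eA_inv (g : FreeGroup Bool) : eA g⁻¹ = - eA g := by simp [eA]

lemma poly_inv (g : FreeGroup Bool) :
    poly g⁻¹ = - shiftE (- eA g) (poly g) := by
  have h := poly_mul g⁻¹ g
  rw [inv_mul_cancel, poly_one, eA_inv] at h
  have := congrArg (fun q => q - shiftE (- eA g) (poly g)) h.symm
  simpa using this

lemma poly_fa : poly fa = 0 := by simp [poly, Φ, fa]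
lemma eA_fa : eA fa = 1 := by simp [eA, expA, fa]
lemma poly_fb : poly fb = Finsupp.single 0 1 := by simp [poly, Φ, fb]
lemma eA_fb : eA fb = 0 := by simp [eA, expB, fb, expA]

lemma poly_fa_pow (n : ℕ) : poly (fa ^ n) = 0 ∧ eA (fa ^ n) = n := by
  induction n with
  | zero => simp [poly_one, eA, map_pow]
  | succ n ih =>
    rw [pow_succ]
    constructor
    · rw [poly_mul, ih.1, poly_fa]; simp
    · rw [eA_mul, ih.2, eA_fa]; push_cast; ring

lemma poly_fb_zpow (z : ℤ) : poly (fb ^ z) = Finsupp.single 0 z ∧ eA (fb ^ z) = 0 := by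
  constructor
  · show Multiplicative.toAdd ((Φ (fb ^ z)).left) = _
    rw [map_zpow]
    have h : Φ fb = SemidirectProduct.inl (Multiplicative.ofAdd (Finsupp.single 0 1)) := by
      simp [Φ, fb]
    rw [h, ← map_zpow]
    show Multiplicative.toAdd ((Multiplicative.ofAdd (Finsupp.single (0:ℤ) (1:ℤ))) ^ z) = _
    rw [← ofAdd_zsmul, toAdd_ofAdd, Finsupp.smul_single]
    simp
  · simp [eA, map_zpow, expA, fb]

/-- sum of coefficients -/
def csum (q : ℤ →₀ ℤ) : ℤ := q.sum fun _ v => v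
/-- ℓ¹ norm -/
def L1 (q : ℤ →₀ ℤ) : ℤ := q.sum fun _ v => |v|

lemma support_shiftE (s : ℤ) (q : ℤ →₀ ℤ) :
    (shiftE s q).support = q.support.map (Equiv.addRight s).toEmbedding := by
  ext d
  simp only [Finsupp.mem_support_iff, Finset.mem_map, Equiv.coe_toEmbedding,
    Equiv.coe_addRight, shiftE_apply]
  constructor
  · intro h; exact ⟨d - s, h, by ring⟩
  · rintro ⟨x, hx, rfl⟩; simpa using hx

lemma sum_shiftE (F : ℤ → ℤ) (s : ℤ) (q : ℤ →₀ ℤ) :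
    ((shiftE s q).sum fun _ v => F v) = q.sum fun _ v => F v := by
  rw [Finsupp.sum, Finsupp.sum, support_shiftE, Finset.sum_map]
  refine Finset.sum_congr rfl fun d _ => ?_
  simp [shiftE_apply]

lemma csum_shiftE (s : ℤ) (q : ℤ →₀ ℤ) : csum (shiftE s q) = csum q := sum_shiftE _ s q
lemma L1_shiftE (s : ℤ) (q : ℤ →₀ ℤ) : L1 (shiftE s q) = L1 q := sum_shiftE _ s q

lemma csum_neg (q : ℤ →₀ ℤ) : csum (-q) = - csum q := by
  unfold csum
  rw [Finsupp.sum, Finsupp.sum, Finsupp.support_neg, ← Finset.sum_neg_distrib]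
  exact Finset.sum_congr rfl fun d _ => by simp

lemma L1_neg (q : ℤ →₀ ℤ) : L1 (-q) = L1 q := by
  unfold L1
  rw [Finsupp.sum, Finsupp.sum, Finsupp.support_neg]
  exact Finset.sum_congr rfl fun d _ => by simp

lemma L1_zero : L1 0 = 0 := by simp [L1]
lemma csum_zero : csum 0 = 0 := by simp [csum]

lemma L1_single (m v : ℤ) : L1 (Finsupp.single m v) = |v| := by
  unfold L1
  rcases eq_or_ne v 0 with rfl | hv
  · simp
  · rw [Finsupp.sum_single_index] <;> simp

lemma L1_nonneg (q : ℤ →₀ ℤ) : 0 ≤ L1 q :=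
  Finset.sum_nonneg fun d _ => abs_nonneg _

lemma abs_csum_le (q : ℤ →₀ ℤ) : |csum q| ≤ L1 q :=
  Finset.abs_sum_le_sum_abs _ _

lemma L1_add_le (p q : ℤ →₀ ℤ) : L1 (p + q) ≤ L1 p + L1 q := by
  classical
  unfold L1
  rw [Finsupp.sum, Finsupp.sum, Finsupp.sum]
  have h1 : (p + q).support ⊆ p.support ∪ q.support := Finsupp.support_add
  calc ∑ d ∈ (p + q).support, |(p + q) d|
      ≤ ∑ d ∈ p.support ∪ q.support, |(p + q) d| := by
        apply Finset.sum_le_sum_of_subset_of_nonneg h1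
        intro i _ _; exact abs_nonneg _
    _ ≤ ∑ d ∈ p.support ∪ q.support, (|p d| + |q d|) := by
        apply Finset.sum_le_sum; intro i _
        simpa using abs_add_le (p i) (q i)
    _ = ∑ d ∈ p.support ∪ q.support, |p d| + ∑ d ∈ p.support ∪ q.support, |q d| :=
        Finset.sum_add_distrib
    _ ≤ ∑ d ∈ p.support, |p d| + ∑ d ∈ q.support, |q d| := by
        refine add_le_add ?_ ?_
        · refine (Finset.sum_subset Finset.subset_union_left ?_).symm.le
          intro x _ hx
          rw [Finsupp.notMem_support_iff.mp hx, abs_zero]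
        · refine (Finset.sum_subset Finset.subset_union_right ?_).symm.le
          intro x _ hx
          rw [Finsupp.notMem_support_iff.mp hx, abs_zero]

lemma L1_add_disjoint (p q : ℤ →₀ ℤ) (h : Disjoint p.support q.support) :
    L1 (p + q) = L1 p + L1 q := by
  classical
  unfold L1
  rw [Finsupp.sum, Finsupp.sum, Finsupp.sum, Finsupp.support_add_eq h, Finset.sum_union h]
  congr 1
  · refine Finset.sum_congr rfl fun d hd => ?_
    have : q d = 0 := Finsupp.notMem_support_iff.mp (Finset.disjoint_left.mp h hd)
    simp [this]
  · refine Finset.sum_congr rfl fun d hd => ?_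
    have : p d = 0 := Finsupp.notMem_support_iff.mp (Finset.disjoint_right.mp h hd)
    simp [this]

lemma mk_cons (x : Bool × Bool) (L : List (Bool × Bool)) :
    FreeGroup.mk (x :: L) = FreeGroup.mk [x] * FreeGroup.mk L := by
  rw [FreeGroup.mul_mk]; rfl

lemma mk_single_eq (x b : Bool) :
    FreeGroup.mk [(x, b)] = if b then FreeGroup.of x else (FreeGroup.of x)⁻¹ := by
  cases b
  · show _ = (FreeGroup.of x)⁻¹
    rw [FreeGroup.of, FreeGroup.inv_mk]
    rfl
  · rfl

lemma eA_one : eA 1 = 0 := by simp [eA]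

lemma f_inv (g : FreeGroup Bool) :
    |eA g⁻¹| + L1 (poly g⁻¹) = |eA g| + L1 (poly g) := by
  rw [eA_inv, poly_inv, abs_neg, L1_neg, L1_shiftE]

lemma f_mul_le (g h : FreeGroup Bool) :
    |eA (g * h)| + L1 (poly (g * h)) ≤ (|eA g| + L1 (poly g)) + (|eA h| + L1 (poly h)) := by
  rw [eA_mul, poly_mul]
  have h1 := L1_add_le (poly g) (shiftE (eA g) (poly h))
  rw [L1_shiftE] at h1
  have h2 := abs_add_le (eA g) (eA h)
  linarith

lemma letter_bound (x b : Bool) :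
    |eA (FreeGroup.mk [(x, b)])| + L1 (poly (FreeGroup.mk [(x, b)])) ≤ 1 := by
  have h : ∀ y : Bool, |eA (FreeGroup.of y)| + L1 (poly (FreeGroup.of y)) ≤ 1 := by
    intro y
    cases y
    · rw [show FreeGroup.of false = fb from rfl, poly_fb, eA_fb, L1_single]
      norm_num
    · rw [show FreeGroup.of true = fa from rfl, poly_fa, eA_fa, L1_zero]
      norm_num
  rw [mk_single_eq]
  cases b
  · simpa [f_inv] using h x
  · simpa using h x

lemma f_mk_le (L : List (Bool × Bool)) :
    |eA (FreeGroup.mk L)| + L1 (poly (FreeGroup.mk L)) ≤ (L.length : ℤ) := by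
  induction L with
  | nil =>
    rw [show FreeGroup.mk ([] : List (Bool × Bool)) = 1 from rfl, eA_one, poly_one, L1_zero]
    simp
  | cons x L ih =>
    obtain ⟨x, b⟩ := x
    rw [mk_cons]
    have h1 := f_mul_le (FreeGroup.mk [(x, b)]) (FreeGroup.mk L)
    have h2 := letter_bound x b
    simp only [List.length_cons]
    push_cast
    linarith

lemma f_le_norm (g : FreeGroup Bool) : |eA g| + L1 (poly g) ≤ (g.norm : ℤ) := by
  have h := f_mk_le g.toWord
  rwa [FreeGroup.mk_toWord] at h

lemma poly_letter_apply (x b : Bool) (d : ℤ) (hd : d ≠ 0) :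
    poly (FreeGroup.mk [(x, b)]) d = 0 := by
  rw [mk_single_eq]
  cases b
  · simp only [Bool.false_eq_true, if_false]
    rw [poly_inv]
    cases x
    · have pf : poly (FreeGroup.of false) = Finsupp.single 0 1 := poly_fb
      have ef : eA (FreeGroup.of false) = 0 := eA_fb
      rw [pf, ef]
      simp only [neg_zero, Finsupp.neg_apply, shiftE_apply, sub_zero, neg_eq_zero,
        Finsupp.single_apply]
      rw [if_neg (Ne.symm hd)]
    · have pa : poly (FreeGroup.of true) = 0 := poly_fa
      rw [pa]
      simp
  · simp only [if_true]
    cases x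
    · have pf : poly (FreeGroup.of false) = Finsupp.single 0 1 := poly_fb
      rw [pf]
      simp only [Finsupp.single_apply]
      rw [if_neg (Ne.symm hd)]
    · have pa : poly (FreeGroup.of true) = 0 := poly_fa
      rw [pa]; rfl

lemma abs_eA_letter (x b : Bool) : |eA (FreeGroup.mk [(x, b)])| ≤ 1 := by
  have h1 := letter_bound x b
  have h2 := L1_nonneg (poly (FreeGroup.mk [(x, b)]))
  linarith

lemma supp_mk (L : List (Bool × Bool)) :
    ∀ d : ℤ, poly (FreeGroup.mk L) d ≠ 0 → |d| + 1 ≤ (L.length : ℤ) := by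
  induction L with
  | nil =>
    intro d hd
    rw [show FreeGroup.mk ([] : List (Bool × Bool)) = 1 from rfl, poly_one] at hd
    simp at hd
  | cons x L ih =>
    obtain ⟨x, b⟩ := x
    intro d hd
    rw [mk_cons, poly_mul] at hd
    simp only [Finsupp.add_apply, shiftE_apply] at hd
    simp only [List.length_cons]
    push_cast
    by_cases h2 : poly (FreeGroup.mk L) (d - eA (FreeGroup.mk [(x, b)])) = 0
    · have h3 : poly (FreeGroup.mk [(x, b)]) d ≠ 0 := by
        intro h; rw [h, h2] at hd; simp at hd
      have h4 : d = 0 := by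
        by_contra h5
        exact h3 (poly_letter_apply x b d h5)
      rw [h4]
      simp
    · have h5 := ih _ h2
      have h6 := abs_eA_letter x b
      have h7 : |d| ≤ |d - eA (FreeGroup.mk [(x, b)])| + |eA (FreeGroup.mk [(x, b)])| := by
        have := abs_add_le (d - eA (FreeGroup.mk [(x, b)])) (eA (FreeGroup.mk [(x, b)]))
        simpa using this
      linarith

lemma supp_le_norm (g : FreeGroup Bool) (d : ℤ) (hd : poly g d ≠ 0) :
    |d| + 1 ≤ (g.norm : ℤ) := by
  have h := supp_mk g.toWord d
  rw [FreeGroup.mk_toWord] at h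
  exact h hd

lemma csum_single (m v : ℤ) : csum (Finsupp.single m v) = v := by
  unfold csum
  rw [Finsupp.sum_single_index rfl]

noncomputable def csumHom : (ℤ →₀ ℤ) →+ ℤ where
  toFun := csum
  map_zero' := csum_zero
  map_add' p q := by
    show csum (p + q) = csum p + csum q
    unfold csum
    exact Finsupp.sum_add_index' (fun _ => rfl) (fun _ _ _ => rfl)

lemma csumHom_apply (q : ℤ →₀ ℤ) : csumHom q = csum q := rfl

noncomputable def ψ : W →* Multiplicative ℤ :=
  SemidirectProduct.lift (AddMonoidHom.toMultiplicative csumHom) 1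
    (by
      intro g
      apply MonoidHom.ext
      intro n
      simp only [MonoidHom.comp_apply, MulEquiv.coe_toMonoidHom, MulAut.conj_apply,
        MonoidHom.one_apply, one_mul, inv_one, mul_one]
      show Multiplicative.ofAdd (csumHom (shiftE (Multiplicative.toAdd g) (Multiplicative.toAdd n)))
        = Multiplicative.ofAdd (csumHom (Multiplicative.toAdd n))
      congr 1
      exact csum_shiftE _ _)

lemma csum_poly (g : FreeGroup Bool) : csum (poly g) = Multiplicative.toAdd (expB g) := by
  have h : ψ.comp Φ = expB := by
    apply FreeGroup.ext_hom
    intro a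
    cases a
    · show ψ (Φ (FreeGroup.of false)) = _
      have : Φ (FreeGroup.of false)
          = SemidirectProduct.inl (Multiplicative.ofAdd (Finsupp.single 0 1)) := by
        simp [Φ]
      rw [this, ψ, SemidirectProduct.lift_inl]
      show Multiplicative.ofAdd (csumHom (Finsupp.single 0 1)) = expB (FreeGroup.of false)
      have h2 : csumHom (Finsupp.single (0:ℤ) (1:ℤ)) = 1 := by
        rw [csumHom_apply]; exact csum_single 0 1
      rw [h2]
      simp [expB]
    · show ψ (Φ (FreeGroup.of true)) = _
      have : Φ (FreeGroup.of true) = SemidirectProduct.inr (Multiplicative.ofAdd 1) := by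
        simp [Φ]
      rw [this, ψ, SemidirectProduct.lift_inr]
      simp [expB]
  have h2 := congrFun (congrArg DFunLike.coe h) g
  simp only [MonoidHom.comp_apply] at h2
  have h3 : ψ (Φ g) = Multiplicative.ofAdd (csum (poly g)) := by
    rw [← SemidirectProduct.inl_left_mul_inr_right (Φ g)]
    rw [map_mul, ψ, SemidirectProduct.lift_inl, SemidirectProduct.lift_inr]
    show Multiplicative.ofAdd (csumHom (poly g)) * 1 = _
    rw [mul_one, csumHom_apply]
  rw [h3] at h2
  rw [← h2]
  simp

/-- For reduced words r₁, r₂ of length at most k (k ≥ 1), the length of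
r₁⁻¹·aᵏ·b⁻⁴ᵏ·aᵏ·r₂ is at least 4k + (k - x₁ + |y₁|) + (k + x₂ + |y₂|), hence
at least 6k - x₁ + x₂ + |y₁| + |y₂|, where xᵢ, yᵢ are the a- and b-exponent
sums of rᵢ. -/
theorem stmt15 (k : ℕ) (hk : 1 ≤ k) (r₁ r₂ : FreeGroup Bool)
    (h₁ : r₁.norm ≤ k) (h₂ : r₂.norm ≤ k)
    (x₁ x₂ y₁ y₂ : ℤ)
    (hx₁ : expA r₁ = Multiplicative.ofAdd x₁) (hx₂ : expA r₂ = Multiplicative.ofAdd x₂)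
    (hy₁ : expB r₁ = Multiplicative.ofAdd y₁) (hy₂ : expB r₂ = Multiplicative.ofAdd y₂) :
    (4 * k + ((k : ℤ) - x₁ + |y₁|) + ((k : ℤ) + x₂ + |y₂|) ≤
      ((r₁⁻¹ * fa ^ k * fb ^ (-(4 * k : ℤ)) * fa ^ k * r₂).norm : ℤ)) ∧
    (6 * (k : ℤ) - x₁ + x₂ + |y₁| + |y₂| ≤
      ((r₁⁻¹ * fa ^ k * fb ^ (-(4 * k : ℤ)) * fa ^ k * r₂).norm : ℤ)) := by
  have hex₁ : eA r₁ = x₁ := by rw [eA, hx₁, toAdd_ofAdd]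
  have hex₂ : eA r₂ = x₂ := by rw [eA, hx₂, toAdd_ofAdd]
  have hey₁ : csum (poly r₁) = y₁ := by rw [csum_poly, hy₁, toAdd_ofAdd]
  have hey₂ : csum (poly r₂) = y₂ := by rw [csum_poly, hy₂, toAdd_ofAdd]
  have hfr₁ := f_le_norm r₁
  have hfr₂ := f_le_norm r₂
  have hL₁ := L1_nonneg (poly r₁)
  have hL₂ := L1_nonneg (poly r₂)
  have hn₁ : (r₁.norm : ℤ) ≤ k := by exact_mod_cast h₁
  have hn₂ : (r₂.norm : ℤ) ≤ k := by exact_mod_cast h₂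
  have hx1k : |x₁| ≤ (k : ℤ) := by rw [← hex₁]; linarith
  have hx2k : |x₂| ≤ (k : ℤ) := by rw [← hex₂]; linarith
  set z : ℤ := -(4 * k : ℤ) with hz
  set w : FreeGroup Bool := r₁⁻¹ * fa ^ k * fb ^ z * fa ^ k * r₂ with hw
  set A : ℤ →₀ ℤ := -(shiftE (-x₁) (poly r₁)) with hA
  set B : ℤ →₀ ℤ := Finsupp.single ((k : ℤ) - x₁) z with hB
  set C : ℤ →₀ ℤ := shiftE (2 * k - x₁) (poly r₂) with hC
  have e1 : eA r₁⁻¹ = -x₁ := by rw [eA_inv, hex₁]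
  have efa : eA (fa ^ k) = k := (poly_fa_pow k).2
  have efb : eA (fb ^ z) = 0 := (poly_fb_zpow z).2
  have e2 : eA (r₁⁻¹ * fa ^ k) = k - x₁ := by rw [eA_mul, e1, efa]; ring
  have e3 : eA (r₁⁻¹ * fa ^ k * fb ^ z) = k - x₁ := by rw [eA_mul, e2, efb]; ring
  have e4 : eA (r₁⁻¹ * fa ^ k * fb ^ z * fa ^ k) = 2 * k - x₁ := by
    rw [eA_mul, e3, efa]; ring
  have heaw : eA w = 2 * k - x₁ + x₂ := by rw [hw, eA_mul, e4, hex₂]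
  have p1 : poly (r₁⁻¹ * fa ^ k) = A := by
    rw [poly_mul, (poly_fa_pow k).1, map_zero, add_zero, poly_inv, hex₁, hA]
  have p2 : poly (r₁⁻¹ * fa ^ k * fb ^ z) = A + B := by
    rw [poly_mul, p1, (poly_fb_zpow z).1, e2, shiftE_single, zero_add, hB]
  have p3 : poly (r₁⁻¹ * fa ^ k * fb ^ z * fa ^ k) = A + B := by
    rw [poly_mul, p2, (poly_fa_pow k).1, map_zero, add_zero]
  have pw : poly w = A + B + C := by rw [hw, poly_mul, p3, e4, hC]
  -- support bounds
  have hAd : ∀ d : ℤ, A d ≠ 0 → d < (k : ℤ) - x₁ := by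
    intro d hd
    have h5 : poly r₁ (d + x₁) ≠ 0 := by
      intro h
      apply hd
      rw [hA]
      simp only [Finsupp.neg_apply, shiftE_apply, sub_neg_eq_add, h, neg_zero]
    have h6 := supp_le_norm r₁ _ h5
    have h7 := le_abs_self (d + x₁)
    linarith
  have hCd : ∀ d : ℤ, C d ≠ 0 → (k : ℤ) - x₁ < d := by
    intro d hd
    have h5 : poly r₂ (d - (2 * k - x₁)) ≠ 0 := by
      intro h
      apply hd
      rw [hC, shiftE_apply, h]
    have h6 := supp_le_norm r₂ _ h5
    have h7 := neg_abs_le (d - (2 * k - x₁))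
    linarith
  have hdisj1 : Disjoint A.support B.support := by
    rw [Finset.disjoint_left]
    intro d hd hdB
    have h5 : d < (k : ℤ) - x₁ := hAd d (Finsupp.mem_support_iff.mp hd)
    have h6 : d = (k : ℤ) - x₁ := by
      have := Finsupp.support_single_subset hdB
      simpa using this
    omega
  have hdisj2 : Disjoint (A + B).support C.support := by
    rw [Finset.disjoint_left]
    intro d hd hdC
    have h5 : (k : ℤ) - x₁ < d := hCd d (Finsupp.mem_support_iff.mp hdC)
    have h6 := Finsupp.support_add hd
    rcases Finset.mem_union.mp h6 with h7 | h7
    · have := hAd d (Finsupp.mem_support_iff.mp h7)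
      omega
    · have : d = (k : ℤ) - x₁ := by
        have := Finsupp.support_single_subset h7
        simpa using this
      omega
  have hL1w : L1 (poly w) = L1 A + L1 B + L1 C := by
    rw [pw, L1_add_disjoint _ _ hdisj2, L1_add_disjoint _ _ hdisj1]
  have hLA : |y₁| ≤ L1 A := by
    have h5 : csum A = -y₁ := by rw [hA, csum_neg, csum_shiftE, hey₁]
    have h6 := abs_csum_le A
    rw [h5, abs_neg] at h6
    exact h6
  have hLB : L1 B = 4 * k := by
    rw [hB, L1_single, hz, abs_neg, abs_of_nonneg (by positivity)]
  have hLC : |y₂| ≤ L1 C := by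
    have h5 : csum C = y₂ := by rw [hC, csum_shiftE, hey₂]
    have h6 := abs_csum_le C
    rw [h5] at h6
    exact h6
  have hfw := f_le_norm w
  rw [hL1w, heaw] at hfw
  have habs : |2 * (k : ℤ) - x₁ + x₂| = 2 * k - x₁ + x₂ := by
    have h5 := abs_le.mp hx1k
    have h6 := abs_le.mp hx2k
    exact abs_of_nonneg (by linarith)
  rw [habs] at hfw
  constructor
  · push_cast
    linarith
  · push_cast
    linarith
end
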